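/- arXiv:2505.18439 — 2 statements merged into one kernel-verified Lean document; each statement's English description precedes it below -/
import Mathlib

section
/- Let λ₂ ∈ ℝ, ε > 0, and let g : (0,ε) → ℝ be a twice continuously differentiable solution of g″ + H·g′ + (λ₂ − Λ)·g = 0 on (0,ε) with g(r)/r → 1 as r → 0⁺. Then (g(r) − r)/r³ → −((2/3)·kn + 2k − 8/3 + λ₂)/(2kn + 4) as r → 0⁺; that is, g(r) = r − (((2/3)kn + 2k − 8/3 + λ₂)/(2kn+4))·r³ + o(r³) at r = 0. -/
open Real Filter Set

lemma lim_sinh_div : Tendsto (fun r => Real.sinh r / r) (nhdsWithin 0 (Set.Ioi 0)) (nhds 1) := by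
  have h := (Real.hasDerivAt_sinh 0)
  rw [hasDerivAt_iff_tendsto_slope] at h
  have h2 : Tendsto (slope Real.sinh 0) (nhdsWithin 0 (Set.Ioi 0)) (nhds (Real.cosh 0)) :=
    h.mono_left (nhdsWithin_mono _ (by intro x hx; simpa using ne_of_gt hx))
  have h3 : Tendsto (fun r => Real.sinh r / r) (nhdsWithin 0 (Set.Ioi 0)) (nhds (Real.cosh 0)) := by
    apply h2.congr
    intro x
    simp [slope_def_field]
  simpa using h3

lemma lim_r_div_sinh : Tendsto (fun r => r / Real.sinh r) (nhdsWithin 0 (Set.Ioi 0)) (nhds 1) := by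
  have := lim_sinh_div.inv₀ (by norm_num)
  simpa using this

lemma lim_sc : Tendsto (fun r => (Real.sinh r * Real.cosh r - r) / (r * Real.sinh r ^ 2))
    (nhdsWithin 0 (Set.Ioi 0)) (nhds (2/3)) := by
  apply HasDerivAt.lhopital_zero_right_on_Ioo (f' := fun r => 2 * Real.sinh r ^ 2)
    (g' := fun r => Real.sinh r ^ 2 + 2 * r * (Real.sinh r * Real.cosh r)) (b := (1:ℝ)) one_pos
  · intro x hx
    have h1 : HasDerivAt (fun r => Real.sinh r * Real.cosh r - r)
        (Real.cosh x * Real.cosh x + Real.sinh x * Real.sinh x - 1) x :=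
      ((Real.hasDerivAt_sinh x).mul (Real.hasDerivAt_cosh x)).sub (hasDerivAt_id x)
    have : Real.cosh x * Real.cosh x + Real.sinh x * Real.sinh x - 1 = 2 * Real.sinh x ^ 2 := by
      have := Real.cosh_sq x; nlinarith
    rwa [this] at h1
  · intro x hx
    have h1 : HasDerivAt (fun r => r * Real.sinh r ^ 2)
        (1 * Real.sinh x ^ 2 + x * (↑2 * Real.sinh x ^ (2-1) * Real.cosh x)) x :=
      (hasDerivAt_id x).mul ((Real.hasDerivAt_sinh x).pow 2)
    have : 1 * Real.sinh x ^ 2 + x * (↑2 * Real.sinh x ^ (2-1) * Real.cosh x)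
        = Real.sinh x ^ 2 + 2 * x * (Real.sinh x * Real.cosh x) := by push_cast; ring
    rwa [this] at h1
  · intro x hx
    have hs := Real.sinh_pos_iff.2 hx.1
    have hc := Real.cosh_pos (x := x)
    exact ne_of_gt (by nlinarith [mul_pos (mul_pos hx.1 hs) hc, pow_pos hs 2])
  · have : Tendsto (fun r => Real.sinh r * Real.cosh r - r) (nhds 0) (nhds 0) := by
      have := (Real.continuous_sinh.mul Real.continuous_cosh).sub continuous_id
      have h := this.tendsto 0
      simp only [Pi.sub_apply, Pi.mul_apply, id_eq, Real.sinh_zero, Real.cosh_zero, mul_one, sub_zero] at h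
      exact h
    exact this.mono_left nhdsWithin_le_nhds
  · have : Tendsto (fun r => r * Real.sinh r ^ 2) (nhds 0) (nhds 0) := by
      have := continuous_id.mul (Real.continuous_sinh.pow 2)
      have h := this.tendsto 0
      simp only [Pi.mul_apply, Pi.pow_apply, id_eq, Real.sinh_zero, zero_mul] at h
      exact h
    exact this.mono_left nhdsWithin_le_nhds
  · have key : Tendsto (fun r => 2 / (1 + 2 * (r / Real.sinh r) * Real.cosh r))
        (nhdsWithin 0 (Set.Ioi 0)) (nhds (2/3)) := by
      have h1 : Tendsto (fun r => 1 + 2 * (r / Real.sinh r) * Real.cosh r)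
          (nhdsWithin 0 (Set.Ioi 0)) (nhds 3) := by
        have hc : Tendsto Real.cosh (nhdsWithin 0 (Set.Ioi 0)) (nhds 1) := by
          have := Real.continuous_cosh.tendsto 0
          simpa using this.mono_left nhdsWithin_le_nhds
        have := ((lim_r_div_sinh.const_mul 2).mul hc).const_add 1
        convert this using 2 <;> norm_num
      have := (tendsto_const_nhds (x := (2:ℝ))).div h1 (by norm_num)
      norm_num at this ⊢
      exact this
    apply key.congr'
    filter_upwards [self_mem_nhdsWithin] with r (hr : 0 < r)
    have hs := Real.sinh_pos_iff.2 hr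
    field_simp


lemma blowup_aux (εh K L z₀ : ℝ) (hεh : 0 < εh) (hK : 0 < K) (hL : 0 < L)
    (z W P : ℝ → ℝ)
    (hz : ∀ r ∈ Set.Ioo (0:ℝ) εh, HasDerivAt z (W r / P r) r)
    (hPpos : ∀ r ∈ Set.Ioo (0:ℝ) εh, 0 < P r)
    (hPle : ∀ r ∈ Set.Ioo (0:ℝ) εh, P r ≤ K * r)
    (hWc : ContinuousOn W (Set.Ioo 0 εh)) (hPc : ContinuousOn P (Set.Ioo 0 εh))
    (hW : Tendsto W (nhdsWithin 0 (Set.Ioi 0)) (nhds L))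
    (hzl : Tendsto z (nhdsWithin 0 (Set.Ioi 0)) (nhds z₀)) : False := by
  -- find δ₀ with W ≥ L/2 on (0, δ₀]
  have hev : ∀ᶠ s in nhdsWithin 0 (Set.Ioi 0), L / 2 ≤ W s :=
    hW.eventually (eventually_ge_nhds (by linarith))
  obtain ⟨u, hu0, hu⟩ := mem_nhdsGT_iff_exists_Ioo_subset.1 hev
  have hu0' : 0 < u := hu0
  set δ₀ := min (u/2) (εh/2) with hδ₀def
  have hδ₀pos : 0 < δ₀ := lt_min (by positivity) (by positivity)
  have hδ₀u : δ₀ < u := lt_of_le_of_lt (min_le_left _ _) (by linarith)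
  have hδ₀ε : δ₀ < εh := lt_of_le_of_lt (min_le_right _ _) (by linarith)
  have hWge : ∀ s ∈ Set.Ioc (0:ℝ) δ₀, L / 2 ≤ W s := by
    intro s hs
    exact hu ⟨hs.1, lt_of_le_of_lt hs.2 hδ₀u⟩
  have hsub : ∀ x ∈ Set.Ioo (0:ℝ) δ₀, Set.uIcc x δ₀ ⊆ Set.Ioo 0 εh := by
    intro x hx
    rw [Set.uIcc_of_le hx.2.le]
    exact fun s hs => ⟨lt_of_lt_of_le hx.1 hs.1, lt_of_le_of_lt hs.2 hδ₀ε⟩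
  -- key inequality
  have key : ∀ x ∈ Set.Ioo (0:ℝ) δ₀, z x ≤ z δ₀ - L / (2*K) * Real.log (δ₀ / x) := by
    intro x hx
    have hxpos := hx.1
    have hxδ := hx.2
    have hcont : ContinuousOn (fun s => W s / P s) (Set.uIcc x δ₀) := by
      apply ContinuousOn.div (hWc.mono (hsub x hx)) (hPc.mono (hsub x hx))
      intro s hs; exact ne_of_gt (hPpos s (hsub x hx hs))
    have hftc : ∫ s in x..δ₀, W s / P s = z δ₀ - z x := by
      apply intervalIntegral.integral_eq_sub_of_hasDerivAt
      · intro s hs; exact hz s (hsub x hx hs)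
      · exact hcont.intervalIntegrable
    have hmono : ∫ s in x..δ₀, L / (2*K) * (1/s) ≤ ∫ s in x..δ₀, W s / P s := by
      apply intervalIntegral.integral_mono_on hxδ.le
      · apply ContinuousOn.intervalIntegrable
        apply ContinuousOn.mul continuousOn_const
        apply ContinuousOn.div continuousOn_const continuousOn_id
        intro s hs
        rw [Set.uIcc_of_le hxδ.le] at hs
        exact ne_of_gt (lt_of_lt_of_le hxpos hs.1)
      · exact hcont.intervalIntegrable
      · intro s hs
        have hsI : s ∈ Set.Ioo (0:ℝ) εh := hsub x hx (by rw [Set.uIcc_of_le hxδ.le]; exact hs)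
        have hspos : 0 < s := hsI.1
        have hP1 := hPpos s hsI
        have hP2 := hPle s hsI
        have hW1 : L / 2 ≤ W s := hWge s ⟨hspos, hs.2⟩
        have e1 : L / (2*K) * (1/s) = (L/2) / (K * s) := by
          field_simp
        rw [e1, div_le_div_iff₀ (by positivity) hP1]
        nlinarith [mul_le_mul hW1 hP2 hP1.le (le_trans (by positivity : (0:ℝ) ≤ L/2) hW1)]
    have hlog : ∫ s in x..δ₀, L / (2*K) * (1/s) = L / (2*K) * Real.log (δ₀ / x) := by
      rw [intervalIntegral.integral_const_mul, integral_one_div]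
      rw [Set.uIcc_of_le hxδ.le]
      intro h0
      exact absurd h0.1 (by linarith)
    linarith [hftc ▸ (hlog ▸ hmono)]
  -- tendsto atBot
  have hlogbot : Tendsto (fun x => z δ₀ - L / (2*K) * Real.log (δ₀ / x))
      (nhdsWithin 0 (Set.Ioi 0)) atBot := by
    have h1 : Tendsto (fun x : ℝ => Real.log (δ₀ / x)) (nhdsWithin 0 (Set.Ioi 0)) atTop := by
      have hneg : Tendsto (fun x : ℝ => -Real.log x) (nhdsWithin 0 (Set.Ioi 0)) atTop :=
        tendsto_neg_atBot_atTop.comp Real.tendsto_log_nhdsGT_zero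
      have h2 : Tendsto (fun x : ℝ => Real.log δ₀ - Real.log x) (nhdsWithin 0 (Set.Ioi 0)) atTop :=
        (tendsto_atTop_add_const_left _ (Real.log δ₀) hneg).congr (fun x => (sub_eq_add_neg _ _).symm)
      apply h2.congr'
      filter_upwards [self_mem_nhdsWithin] with x (hx : 0 < x)
      rw [Real.log_div (ne_of_gt hδ₀pos) (ne_of_gt hx)]
    have h3 : Tendsto (fun x : ℝ => L / (2*K) * Real.log (δ₀ / x)) (nhdsWithin 0 (Set.Ioi 0)) atTop :=
      h1.const_mul_atTop (by positivity)
    have h4 : Tendsto (fun x : ℝ => -(L / (2*K) * Real.log (δ₀ / x))) (nhdsWithin 0 (Set.Ioi 0)) atBot :=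
      tendsto_neg_atTop_atBot.comp h3
    exact (tendsto_atBot_add_const_left _ (z δ₀) h4).congr (fun x => (sub_eq_add_neg _ _).symm)
  have hzbot : Tendsto z (nhdsWithin 0 (Set.Ioi 0)) atBot := by
    apply tendsto_atBot_mono' _ _ hlogbot
    filter_upwards [Ioo_mem_nhdsGT_of_mem (by constructor <;> [rfl; exact hδ₀pos] : (0:ℝ) ∈ Set.Ico 0 δ₀)] with x hx
    exact key x hx
  exact not_tendsto_atBot_of_tendsto_nhds hzl hzbot


lemma key0' (r u v B : ℝ) (hr : r ≠ 0) (hB : B ≠ 0) :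
    (B * (r * u - v)) / (r^2 * B) = (u * r - v * 1) / r ^ 2 := by
  field_simp

lemma key1' (x : ℝ) (a : ℕ) (hx : x ≠ 0) (ha : ((a:ℝ)+4) ≠ 0) (C : ℝ) :
    -(1/((a:ℝ)+4)) * (C / x^(a+3)) = -C/(((a:ℝ)+4)*x^(a+3)) := by
  field_simp

lemma key2' (x : ℝ) (a : ℕ) (hx : x ≠ 0) (A B : ℝ) (hB : B ≠ 0) :
    A / x^(a+4) * (x^(a+1)/B) * (1/2) = (A/(x^2*B))/(2*x) := by
  field_simp
  ring

section Main

/-- Asymptotic expansion at r = 0 of a solution of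
g″ + H·g′ + (λ₂ − Λ)·g = 0 with g(r)/r → 1 as r → 0⁺:
(g(r) − r)/r³ → −((2/3)kn + 2k − 8/3 + λ₂)/(2kn + 4). -/
theorem stmt_5
    (k n : ℕ) (hk : k = 2 ∨ k = 4 ∨ k = 8) (hn : 2 ≤ n) (hk8 : k = 8 → n = 2)
    (H Λ : ℝ → ℝ)
    (hH : ∀ r : ℝ, 0 < r →
      H r = ((k : ℝ) * n - 1) * (Real.cosh r / Real.sinh r) + ((k : ℝ) - 1) * Real.tanh r)
    (hΛ : ∀ r : ℝ, 0 < r →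
      Λ r = ((k : ℝ) * n - 1) / Real.sinh r ^ 2 - ((k : ℝ) - 1) / Real.cosh r ^ 2)
    (lam2 ε : ℝ) (hε : 0 < ε)
    (g g' g'' : ℝ → ℝ)
    (hgd : ∀ r ∈ Set.Ioo (0 : ℝ) ε, HasDerivAt g (g' r) r)
    (hgd' : ∀ r ∈ Set.Ioo (0 : ℝ) ε, HasDerivAt g' (g'' r) r)
    (hgc : ContinuousOn g'' (Set.Ioo 0 ε))
    (hgode : ∀ r ∈ Set.Ioo (0 : ℝ) ε, g'' r + H r * g' r + (lam2 - Λ r) * g r = 0)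
    (hglim : Filter.Tendsto (fun r => g r / r) (nhdsWithin 0 (Set.Ioi 0)) (nhds 1)) :
    Filter.Tendsto (fun r => (g r - r) / r ^ 3) (nhdsWithin 0 (Set.Ioi 0))
      (nhds (-(((2 / 3) * ((k : ℝ) * n) + 2 * k - 8 / 3 + lam2) / (2 * ((k : ℝ) * n) + 4)))) := by
  have hk2 : 2 ≤ k := by rcases hk with h|h|h <;> omega
  have hkn4 : 4 ≤ k * n := le_trans (by norm_num) (Nat.mul_le_mul hk2 hn)
  obtain ⟨a, ha⟩ : ∃ a, k * n = a + 2 := ⟨k * n - 2, by omega⟩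
  obtain ⟨b, hb⟩ : ∃ b, k = b + 2 := ⟨k - 2, by omega⟩
  have hcast1 : ((k : ℝ) * n) = (a : ℝ) + 2 := by
    have : ((k * n : ℕ) : ℝ) = ((a + 2 : ℕ) : ℝ) := by rw [ha]
    push_cast at this; linarith
  have hcast2 : ((k : ℝ)) = (b : ℝ) + 2 := by exact_mod_cast congrArg (fun m : ℕ => (m : ℝ)) hb
  set p : ℝ → ℝ := fun r => Real.sinh r ^ (a + 1) * Real.cosh r ^ (b + 1) with hpdef
  set W : ℝ → ℝ := fun r => p r * (r * g' r - g r) with hWdef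
  set R : ℝ → ℝ := fun r => H r + (lam2 - Λ r) * r with hRdef
  set c₁ : ℝ := 2 / 3 * ((a : ℝ) + 1) + 2 * ((b : ℝ) + 1) + lam2 with hc₁def
  -- positivity of p
  have hppos : ∀ r : ℝ, 0 < r → 0 < p r := by
    intro r hr
    have hs := Real.sinh_pos_iff.2 hr
    have hc := Real.cosh_pos (x := r)
    positivity
  -- derivative of p
  have hp' : ∀ r : ℝ, HasDerivAt p
      (((a : ℝ) + 1) * Real.sinh r ^ a * Real.cosh r ^ (b + 2)
        + ((b : ℝ) + 1) * Real.sinh r ^ (a + 2) * Real.cosh r ^ b) r := by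
    intro r
    have h1 := ((Real.hasDerivAt_sinh r).pow (a + 1)).mul ((Real.hasDerivAt_cosh r).pow (b + 1))
    refine h1.congr_deriv ?_
    simp only [Nat.add_sub_cancel, Pi.pow_apply]
    push_cast
    ring
  -- H p = p'
  have hHp : ∀ r ∈ Set.Ioo (0 : ℝ) ε, H r * p r
      = ((a : ℝ) + 1) * Real.sinh r ^ a * Real.cosh r ^ (b + 2)
        + ((b : ℝ) + 1) * Real.sinh r ^ (a + 2) * Real.cosh r ^ b := by
    intro r hr
    have hs := Real.sinh_pos_iff.2 hr.1
    have hc := Real.cosh_pos (x := r)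
    rw [hH r hr.1, Real.tanh_eq_sinh_div_cosh, hcast1, hcast2, hpdef]
    field_simp
    ring
  -- derivative of W
  have hW' : ∀ r ∈ Set.Ioo (0 : ℝ) ε, HasDerivAt W (-(R r * p r * g r)) r := by
    intro r hr
    have h1 : HasDerivAt (fun x => x * g' x - g x) (1 * g' r + r * g'' r - g' r) r :=
      ((hasDerivAt_id r).mul (hgd' r hr)).sub (hgd r hr)
    have h2 := (hp' r).mul h1
    have hv : (((a : ℝ) + 1) * Real.sinh r ^ a * Real.cosh r ^ (b + 2)
        + ((b : ℝ) + 1) * Real.sinh r ^ (a + 2) * Real.cosh r ^ b) * (r * g' r - g r)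
        + p r * (1 * g' r + r * g'' r - g' r) = -(R r * p r * g r) := by
      have hode := hgode r hr
      have hHpr := hHp r hr
      rw [hRdef]
      linear_combination (g r - r * g' r) * hHpr + (r * p r) * hode
    rw [hv] at h2
    exact h2
  -- continuity
  have hgcont : ContinuousOn g (Set.Ioo 0 ε) :=
    fun r hr => (hgd r hr).continuousAt.continuousWithinAt
  have hg'cont : ContinuousOn g' (Set.Ioo 0 ε) :=
    fun r hr => (hgd' r hr).continuousAt.continuousWithinAt
  have hpc : Continuous p := (Real.continuous_sinh.pow _).mul (Real.continuous_cosh.pow _)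
  have hWc : ContinuousOn W (Set.Ioo 0 ε) :=
    hpc.continuousOn.mul ((continuousOn_id.mul hg'cont).sub hgcont)
  have hHc : ContinuousOn H (Set.Ioo 0 ε) := by
    have hexp : ContinuousOn (fun r => ((k : ℝ) * n - 1) * (Real.cosh r / Real.sinh r)
        + ((k : ℝ) - 1) * Real.tanh r) (Set.Ioo 0 ε) := by
      apply ContinuousOn.add
      · exact continuousOn_const.mul (Real.continuous_cosh.continuousOn.div
          Real.continuous_sinh.continuousOn
          (fun r hr => ne_of_gt (Real.sinh_pos_iff.2 hr.1)))
      · apply continuousOn_const.mul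
        have : ContinuousOn Real.tanh (Set.Ioo (0:ℝ) ε) := by
          apply (Real.continuous_sinh.continuousOn.div Real.continuous_cosh.continuousOn
            (fun r _ => ne_of_gt (Real.cosh_pos r))).congr
          intro r _
          exact Real.tanh_eq_sinh_div_cosh r
        exact this
    exact hexp.congr (fun r hr => hH r hr.1)
  have hΛc : ContinuousOn Λ (Set.Ioo 0 ε) := by
    have hexp : ContinuousOn (fun r => ((k : ℝ) * n - 1) / Real.sinh r ^ 2
        - ((k : ℝ) - 1) / Real.cosh r ^ 2) (Set.Ioo 0 ε) := by
      apply ContinuousOn.sub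
      · exact continuousOn_const.div (Real.continuous_sinh.pow 2).continuousOn
          (fun r hr => pow_ne_zero _ (ne_of_gt (Real.sinh_pos_iff.2 hr.1)))
      · exact continuousOn_const.div (Real.continuous_cosh.pow 2).continuousOn
          (fun r hr => pow_ne_zero _ (ne_of_gt (Real.cosh_pos r)))
    exact hexp.congr (fun r hr => hΛ r hr.1)
  have hRc : ContinuousOn R (Set.Ioo 0 ε) :=
    hHc.add ((continuousOn_const.sub hΛc).mul continuousOn_id)
  -- basic limits
  have hcosh1 : Tendsto Real.cosh (nhdsWithin 0 (Set.Ioi 0)) (nhds 1) := by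
    have := Real.continuous_cosh.tendsto 0
    rw [Real.cosh_zero] at this
    exact this.mono_left nhdsWithin_le_nhds
  have hIoo_mem : Set.Ioo (0:ℝ) ε ∈ nhdsWithin (0:ℝ) (Set.Ioi 0) :=
    Ioo_mem_nhdsGT_of_mem ⟨le_refl 0, hε⟩
  have hpquot : Tendsto (fun r => p r / r ^ (a + 1)) (nhdsWithin 0 (Set.Ioi 0)) (nhds 1) := by
    have h1 := (lim_sinh_div.pow (a + 1)).mul (hcosh1.pow (b + 1))
    rw [one_pow, one_pow, mul_one] at h1
    apply h1.congr'
    filter_upwards [self_mem_nhdsWithin] with r (hr : 0 < r)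
    rw [div_pow, hpdef]
    field_simp
  have hpinv : Tendsto (fun r => r ^ (a + 1) / p r) (nhdsWithin 0 (Set.Ioi 0)) (nhds 1) := by
    have := hpquot.inv₀ one_ne_zero
    rw [inv_one] at this
    apply this.congr
    intro r
    rw [inv_div]
  have hRquot : Tendsto (fun r => R r / r) (nhdsWithin 0 (Set.Ioi 0)) (nhds c₁) := by
    have hic : Tendsto (fun r => 1 / Real.cosh r) (nhdsWithin 0 (Set.Ioi 0)) (nhds 1) := by
      have := hcosh1.inv₀ one_ne_zero
      rw [inv_one] at this
      apply this.congr; intro r; rw [one_div]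
    have hic2 : Tendsto (fun r => 1 / Real.cosh r ^ 2) (nhdsWithin 0 (Set.Ioi 0)) (nhds 1) := by
      have := (hcosh1.pow 2).inv₀ (by norm_num)
      rw [one_pow, inv_one] at this
      apply this.congr; intro r; rw [one_div]
    have h1 : Tendsto (fun r => ((a : ℝ) + 1) * ((Real.sinh r * Real.cosh r - r) / (r * Real.sinh r ^ 2))
        + ((b : ℝ) + 1) * ((Real.sinh r / r) * (1 / Real.cosh r) + 1 / Real.cosh r ^ 2) + lam2)
        (nhdsWithin 0 (Set.Ioi 0))
        (nhds (((a : ℝ) + 1) * (2/3) + ((b : ℝ) + 1) * (1 * 1 + 1) + lam2)) :=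
      ((lim_sc.const_mul _).add (((lim_sinh_div.mul hic).add hic2).const_mul _)).add tendsto_const_nhds
    have h2 : ((a : ℝ) + 1) * (2/3) + ((b : ℝ) + 1) * (1 * 1 + 1) + lam2 = c₁ := by
      rw [hc₁def]; ring
    rw [h2] at h1
    apply h1.congr'
    filter_upwards [hIoo_mem] with r hr
    have hs := Real.sinh_pos_iff.2 hr.1
    have hc := Real.cosh_pos r
    have hs0 : Real.sinh r ≠ 0 := ne_of_gt hs
    have hc0 : Real.cosh r ≠ 0 := ne_of_gt hc
    have hr0 : r ≠ 0 := ne_of_gt hr.1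
    rw [hRdef]
    simp only
    rw [hH r hr.1, hΛ r hr.1, Real.tanh_eq_sinh_div_cosh, hcast1, hcast2]
    field_simp
    ring
  have hInt : Tendsto (fun r => R r * p r * g r / r ^ (a + 3)) (nhdsWithin 0 (Set.Ioi 0)) (nhds c₁) := by
    have h1 := (hRquot.mul hpquot).mul hglim
    rw [mul_one, mul_one] at h1
    apply h1.congr'
    filter_upwards [self_mem_nhdsWithin] with r (hr : 0 < r)
    have e1 : r * r ^ (a + 1) * r = r ^ (a + 3) := by ring
    rw [div_mul_div_comm, div_mul_div_comm, e1]
  have hRpg0 : Tendsto (fun r => R r * p r * g r) (nhdsWithin 0 (Set.Ioi 0)) (nhds 0) := by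
    have hpow : Tendsto (fun r : ℝ => r ^ (a + 3)) (nhdsWithin 0 (Set.Ioi 0)) (nhds 0) := by
      have := (continuous_pow (a + 3)).tendsto (0 : ℝ)
      rw [zero_pow (by omega)] at this
      exact this.mono_left nhdsWithin_le_nhds
    have h1 := hInt.mul hpow
    rw [mul_zero] at h1
    apply h1.congr'
    filter_upwards [self_mem_nhdsWithin] with r (hr : 0 < r)
    rw [div_mul_cancel₀]
    exact pow_ne_zero _ (ne_of_gt hr)
  -- Step C1: W has a limit at 0+
  have hRpgc : ContinuousOn (fun s => R s * p s * g s) (Set.Ioo 0 ε) :=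
    (hRc.mul hpc.continuousOn).mul hgcont
  set r₀ : ℝ := ε / 2 with hr₀def
  have hr₀ : r₀ ∈ Set.Ioo (0:ℝ) ε := ⟨half_pos hε, half_lt_self hε⟩
  set F : ℝ → ℝ := fun s => if 0 < s then R s * p s * g s else 0 with hFdef
  have hFeq : ∀ s : ℝ, 0 < s → F s = R s * p s * g s := fun s hs => if_pos hs
  have hFc : ContinuousOn F (Set.Icc 0 r₀) := by
    intro x hx
    rcases eq_or_lt_of_le hx.1 with h0 | hxpos
    · have h1 : Tendsto F (nhdsWithin 0 (Set.Ioi 0)) (nhds 0) := by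
        apply hRpg0.congr'
        filter_upwards [self_mem_nhdsWithin] with s (hs : 0 < s)
        exact (hFeq s hs).symm
      have h2 : ContinuousWithinAt F (Set.Ioi 0) 0 := by
        have hF0 : F 0 = 0 := if_neg (lt_irrefl 0)
        rw [ContinuousWithinAt, hF0]
        exact h1
      have h3 : ContinuousWithinAt F (Set.Ici 0) 0 := continuousWithinAt_Ioi_iff_Ici.1 h2
      rw [← h0]
      exact h3.mono Set.Icc_subset_Ici_self
    · have hxε : x ∈ Set.Ioo 0 ε := ⟨hxpos, lt_of_le_of_lt hx.2 hr₀.2⟩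
      have hca : ContinuousAt (fun s => R s * p s * g s) x :=
        ContinuousOn.continuousAt hRpgc (Ioo_mem_nhds hxε.1 hxε.2)
      have hFca : ContinuousAt F x := by
        apply hca.congr
        filter_upwards [isOpen_Ioi.mem_nhds hxpos] with s (hs : 0 < s)
        exact (hFeq s hs).symm
      exact hFca.continuousWithinAt
  set Lint : ℝ := W r₀ + ∫ s in (0:ℝ)..r₀, F s with hLdef
  have hWrep : ∀ δ ∈ Set.Ioo (0:ℝ) r₀, W δ = Lint - ∫ s in (0:ℝ)..δ, F s := by
    intro δ hδ
    have hsub2 : Set.uIcc δ r₀ ⊆ Set.Ioo 0 ε := by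
      rw [Set.uIcc_of_le hδ.2.le]
      intro s hs; exact ⟨lt_of_lt_of_le hδ.1 hs.1, lt_of_le_of_lt hs.2 hr₀.2⟩
    have h1 : ∫ s in δ..r₀, -(R s * p s * g s) = W r₀ - W δ := by
      apply intervalIntegral.integral_eq_sub_of_hasDerivAt
      · intro s hs; exact hW' s (hsub2 hs)
      · exact ((hRpgc.mono hsub2).neg).intervalIntegrable
    have h2 : ∫ s in δ..r₀, F s = ∫ s in δ..r₀, R s * p s * g s := by
      apply intervalIntegral.integral_congr
      intro s hs
      rw [Set.uIcc_of_le hδ.2.le] at hs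
      exact hFeq s (lt_of_lt_of_le hδ.1 hs.1)
    have hi1 : IntervalIntegrable F MeasureTheory.volume 0 δ := by
      apply (hFc.mono _).intervalIntegrable
      rw [Set.uIcc_of_le hδ.1.le]
      exact Set.Icc_subset_Icc (le_refl 0) hδ.2.le
    have hi2 : IntervalIntegrable F MeasureTheory.volume δ r₀ := by
      apply (hFc.mono _).intervalIntegrable
      rw [Set.uIcc_of_le hδ.2.le]
      exact Set.Icc_subset_Icc hδ.1.le (le_refl r₀)
    have h3 : (∫ s in (0:ℝ)..δ, F s) + ∫ s in δ..r₀, F s = ∫ s in (0:ℝ)..r₀, F s :=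
      intervalIntegral.integral_add_adjacent_intervals hi1 hi2
    rw [intervalIntegral.integral_neg] at h1
    rw [hLdef]
    linarith [h1, h2, h3]
  have hprim0 : Tendsto (fun δ => ∫ s in (0:ℝ)..δ, F s) (nhdsWithin 0 (Set.Ioi 0)) (nhds 0) := by
    have hFI : MeasureTheory.IntegrableOn F (Set.uIcc 0 r₀) MeasureTheory.volume := by
      rw [Set.uIcc_of_le hr₀.1.le]
      exact hFc.integrableOn_Icc
    have hcp := intervalIntegral.continuousOn_primitive_interval hFI
    rw [Set.uIcc_of_le hr₀.1.le] at hcp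
    have hcw := hcp 0 ⟨le_refl 0, hr₀.1.le⟩
    rw [ContinuousWithinAt, intervalIntegral.integral_same] at hcw
    have hfle : nhdsWithin (0:ℝ) (Set.Ioi 0) ≤ nhdsWithin 0 (Set.Icc 0 r₀) := by
      rw [← nhdsWithin_Ioo_eq_nhdsGT hr₀.1]
      exact nhdsWithin_mono _ Set.Ioo_subset_Icc_self
    exact hcw.mono_left hfle
  have hWLint : Tendsto W (nhdsWithin 0 (Set.Ioi 0)) (nhds Lint) := by
    have h1 : Tendsto (fun δ => Lint - ∫ s in (0:ℝ)..δ, F s) (nhdsWithin 0 (Set.Ioi 0))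
        (nhds (Lint - 0)) := tendsto_const_nhds.sub hprim0
    rw [sub_zero] at h1
    apply h1.congr'
    filter_upwards [Ioo_mem_nhdsGT_of_mem ⟨le_refl (0:ℝ), hr₀.1⟩] with δ hδ
    exact (hWrep δ hδ).symm
  -- derivative of z = g/r
  have hzd : ∀ r ∈ Set.Ioo (0:ℝ) ε, HasDerivAt (fun x => g x / x) (W r / (r^2 * p r)) r := by
    intro r hr
    have h := (hgd r hr).div (hasDerivAt_id r) (ne_of_gt hr.1)
    have hp0 : p r ≠ 0 := ne_of_gt (hppos r hr.1)
    have hr0 : r ≠ 0 := ne_of_gt hr.1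
    simp only [id_eq] at h
    have hveq : W r / (r^2 * p r) = (g' r * r - g r * 1) / r ^ 2 :=
      key0' r (g' r) (g r) (p r) hr0 hp0
    rw [← hveq] at h
    exact h
  -- Step C2 : Lint = 0
  have hLint0 : Lint = 0 := by
    by_contra hL0
    set ε₁ : ℝ := min ε 1 with hε₁def
    have hε₁pos : 0 < ε₁ := lt_min hε one_pos
    have hε₁ε : ε₁ ≤ ε := min_le_left _ _
    have hε₁1 : ε₁ ≤ 1 := min_le_right _ _
    set K : ℝ := Real.sinh 1 ^ (a+1) * Real.cosh 1 ^ (b+1) with hKdef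
    have hKpos : 0 < K := by
      have h1 := Real.sinh_pos_iff.2 (one_pos (α := ℝ))
      have h2 := Real.cosh_pos 1
      positivity
    have hsubε : Set.Ioo (0:ℝ) ε₁ ⊆ Set.Ioo 0 ε := fun s hs => ⟨hs.1, lt_of_lt_of_le hs.2 hε₁ε⟩
    have hPpos2 : ∀ r ∈ Set.Ioo (0:ℝ) ε₁, 0 < r^2 * p r := by
      intro r hr
      have := hppos r hr.1
      have := hr.1
      positivity
    have hPle : ∀ r ∈ Set.Ioo (0:ℝ) ε₁, r^2 * p r ≤ K * r := by
      intro r hr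
      have hr1 : r ≤ 1 := le_trans hr.2.le hε₁1
      have hs0 : (0:ℝ) ≤ Real.sinh r := (Real.sinh_pos_iff.2 hr.1).le
      have h1 : Real.sinh r ^ (a+1) ≤ Real.sinh 1 ^ (a+1) :=
        pow_le_pow_left₀ hs0 (Real.sinh_le_sinh.2 hr1) _
      have h2 : Real.cosh r ^ (b+1) ≤ Real.cosh 1 ^ (b+1) :=
        pow_le_pow_left₀ (Real.cosh_pos r).le
          (Real.cosh_le_cosh.2 (by rw [abs_of_pos hr.1, abs_one]; exact hr1)) _
      have hpK : p r ≤ K := by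
        rw [hpdef, hKdef]
        exact mul_le_mul h1 h2 (pow_nonneg (Real.cosh_pos r).le _)
          (pow_nonneg (Real.sinh_pos_iff.2 (one_pos (α := ℝ))).le _)
      calc r^2 * p r ≤ r^2 * K := mul_le_mul_of_nonneg_left hpK (sq_nonneg r)
        _ ≤ r * K := by nlinarith [mul_nonneg (mul_nonneg hKpos.le hr.1.le) (sub_nonneg.2 hr1)]
        _ = K * r := mul_comm r K
    have hWc1 : ContinuousOn W (Set.Ioo 0 ε₁) := hWc.mono hsubε
    have hPc1 : ContinuousOn (fun r => r^2 * p r) (Set.Ioo (0:ℝ) ε₁) :=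
      ((continuous_pow 2).mul hpc).continuousOn
    rcases lt_or_gt_of_ne hL0 with hneg | hpos
    · refine blowup_aux ε₁ K (-Lint) (-1) hε₁pos hKpos (by linarith) (fun x => -(g x / x))
        (fun x => -(W x)) (fun r => r^2 * p r) ?_ hPpos2 hPle hWc1.neg hPc1 hWLint.neg hglim.neg
      intro r hr
      have h := (hzd r (hsubε hr)).neg
      rw [← neg_div] at h
      exact h
    · exact blowup_aux ε₁ K Lint 1 hε₁pos hKpos hpos (fun x => g x / x) W (fun r => r^2 * p r)
        (fun r hr => hzd r (hsubε hr)) hPpos2 hPle hWc1 hPc1 hWLint hglim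
  have hW0 : Tendsto W (nhdsWithin 0 (Set.Ioi 0)) (nhds 0) := by
    rw [hLint0] at hWLint; exact hWLint
  -- L'Hopital 1 : W r / r^(a+4) → -(1/(a+4)) * c₁
  have ha4 : (0:ℝ) < (a:ℝ) + 4 := by positivity
  have hT1 : Tendsto (fun r => W r / r ^ (a+4)) (nhdsWithin 0 (Set.Ioi 0))
      (nhds (-(1/((a:ℝ)+4)) * c₁)) := by
    apply HasDerivAt.lhopital_zero_right_on_Ioo (f' := fun r => -(R r * p r * g r))
      (g' := fun r => ((a:ℝ)+4) * r^(a+3)) hε hW'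
    · intro x hx
      have h := hasDerivAt_pow (a+4) x
      refine h.congr_deriv ?_
      have he : a + 4 - 1 = a + 3 := by omega
      rw [he]
      push_cast
      ring
    · intro x hx
      exact mul_ne_zero (ne_of_gt ha4) (pow_ne_zero _ (ne_of_gt hx.1))
    · exact hW0
    · have h := (continuous_pow (a+4)).tendsto (0:ℝ)
      rw [zero_pow (by omega : a+4 ≠ 0)] at h
      exact h.mono_left nhdsWithin_le_nhds
    · have h1 := hInt.const_mul (-(1/((a:ℝ)+4)))
      apply h1.congr'
      filter_upwards [self_mem_nhdsWithin] with x (hx : 0 < x)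
      have hx0 : x ≠ 0 := ne_of_gt hx
      have ha40 : ((a:ℝ)+4) ≠ 0 := ne_of_gt ha4
      have hx3 : x^(a+3) ≠ 0 := pow_ne_zero _ hx0
      exact key1' x a hx0 ha40 _
  -- combine with p-asymptotics
  have hT2 : Tendsto (fun r => (W r / (r^2 * p r)) / (2*r)) (nhdsWithin 0 (Set.Ioi 0))
      (nhds (-(1/((a:ℝ)+4)) * c₁ * 1 * (1/2))) := by
    have h1 := (hT1.mul hpinv).mul (tendsto_const_nhds (x := (1/2:ℝ)))
    apply h1.congr'
    filter_upwards [self_mem_nhdsWithin] with x (hx : 0 < x)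
    have hp0 : p x ≠ 0 := ne_of_gt (hppos x hx)
    have hx0 : x ≠ 0 := ne_of_gt hx
    have hx3 : x^(a+4) ≠ 0 := pow_ne_zero _ hx0
    exact key2' x a hx0 (W x) (p x) hp0
  -- L'Hopital 2
  have hT3 : Tendsto (fun r => (g r / r - 1) / r^2) (nhdsWithin 0 (Set.Ioi 0))
      (nhds (-(1/((a:ℝ)+4)) * c₁ * 1 * (1/2))) := by
    apply HasDerivAt.lhopital_zero_right_on_Ioo (f' := fun r => W r / (r^2 * p r))
      (g' := fun r => 2*r) hε
    · intro x hx
      exact (hzd x hx).sub_const 1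
    · intro x hx
      have h := hasDerivAt_pow 2 x
      refine h.congr_deriv ?_
      push_cast
      ring
    · intro x hx
      exact mul_ne_zero two_ne_zero (ne_of_gt hx.1)
    · have h := hglim.sub_const 1
      rw [sub_self] at h
      exact h
    · have h := (continuous_pow 2).tendsto (0:ℝ)
      rw [zero_pow (by omega : 2 ≠ 0)] at h
      exact h.mono_left nhdsWithin_le_nhds
    · exact hT2
  -- final conversion
  have hval : -(1/((a:ℝ)+4)) * c₁ * 1 * (1/2)
      = -(((2/3) * ((k:ℝ)*n) + 2*k - 8/3 + lam2) / (2*((k:ℝ)*n) + 4)) := by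
    rw [hc₁def, hcast1, hcast2]
    have hd : 2*((a:ℝ)+2) + 4 ≠ 0 := by positivity
    have ha40 : ((a:ℝ)+4) ≠ 0 := ne_of_gt ha4
    field_simp
    ring
  rw [← hval]
  apply hT3.congr'
  filter_upwards [self_mem_nhdsWithin] with r (hr : 0 < r)
  have hr0 : r ≠ 0 := ne_of_gt hr
  field_simp

end Main
end

section
/- The function r ↦ Z(r,1) is strictly increasing on (0,∞). -/
set_option maxHeartbeats 2000000

open Real Set

/-- H(r) = (kn−1)·coth(r) + (k−1)·tanh(r). -/
noncomputable def Hfun (k n : ℕ) (r : ℝ) : ℝ :=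
  ((k : ℝ) * n - 1) * (Real.cosh r / Real.sinh r) + ((k : ℝ) - 1) * Real.tanh r

/-- Λ(r) = (kn−1)/sinh²(r) − (k−1)/cosh²(r). -/
noncomputable def Lfun (k n : ℕ) (r : ℝ) : ℝ :=
  ((k : ℝ) * n - 1) / Real.sinh r ^ 2 - ((k : ℝ) - 1) / Real.cosh r ^ 2

/-- S(r,y) = y(1−y)/r − H(r)·y + Λ(r)·r + (λ₁−λ₂)·r. -/
noncomputable def Sfun (k n : ℕ) (lam1 lam2 : ℝ) (r y : ℝ) : ℝ :=
  y * (1 - y) / r - Hfun k n r * y + Lfun k n r * r + (lam1 - lam2) * r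

/-- Z(r,y) = (y²−y)/r² + Λ(r)·(y+1) + Λ′(r)·r + 2λ₁·y − (λ₂−λ₁)
      + S(r,y)²/(2y) + H(r)·S(r,y). -/
noncomputable def Zfun (k n : ℕ) (lam1 lam2 : ℝ) (r y : ℝ) : ℝ :=
  (y ^ 2 - y) / r ^ 2 + Lfun k n r * (y + 1) + deriv (Lfun k n) r * r + 2 * lam1 * y -
    (lam2 - lam1) + (Sfun k n lam1 lam2 r y) ^ 2 / (2 * y) +
    Hfun k n r * Sfun k n lam1 lam2 r y

/-! ### Auxiliary explicit functions -/

noncomputable def Lf (a b r : ℝ) : ℝ := a / Real.sinh r ^ 2 - b / Real.cosh r ^ 2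

noncomputable def L1f (a b r : ℝ) : ℝ :=
  2 * (b * Real.sinh r ^ 4 - a * Real.cosh r ^ 4) / (Real.sinh r ^ 3 * Real.cosh r ^ 3)

noncomputable def L2f (a b r : ℝ) : ℝ :=
  (-2 * a * (Real.sinh r ^ 2 - 3 * Real.cosh r ^ 2) * Real.cosh r ^ 4 +
    2 * b * (Real.cosh r ^ 2 - 3 * Real.sinh r ^ 2) * Real.sinh r ^ 4) /
    (Real.sinh r ^ 4 * Real.cosh r ^ 4)

noncomputable def Hf (a b r : ℝ) : ℝ :=
  (a * Real.cosh r ^ 2 + b * Real.sinh r ^ 2) / (Real.sinh r * Real.cosh r)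

noncomputable def Hdf (a b r : ℝ) : ℝ :=
  (b * Real.sinh r ^ 2 - a * Real.cosh r ^ 2) * (Real.cosh r ^ 2 - Real.sinh r ^ 2) /
    (Real.sinh r ^ 2 * Real.cosh r ^ 2)

noncomputable def Z1 (a b c l1 r : ℝ) : ℝ :=
  2 * Lf a b r + L1f a b r * r + 2 * l1 + c + ((Lf a b r + c) * r) ^ 2 / 2 - (Hf a b r) ^ 2 / 2

noncomputable def Zd (a b c r : ℝ) : ℝ :=
  3 * L1f a b r + L2f a b r * r +
    ((Lf a b r + c) * r) * (L1f a b r * r + (Lf a b r + c)) - Hf a b r * Hdf a b r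

/-! ### Derivative computations -/

lemma hasDerivAt_Lf (a b : ℝ) {r : ℝ} (hs : Real.sinh r ≠ 0) :
    HasDerivAt (Lf a b) (L1f a b r) r := by
  have hc : Real.cosh r ≠ 0 := (Real.cosh_pos r).ne'
  have h1 : HasDerivAt (fun x => Real.sinh x ^ 2) (2 * Real.sinh r ^ 1 * Real.cosh r) r :=
    (Real.hasDerivAt_sinh r).pow 2
  have h2 : HasDerivAt (fun x => Real.cosh x ^ 2) (2 * Real.cosh r ^ 1 * Real.sinh r) r :=
    (Real.hasDerivAt_cosh r).pow 2
  have hA := (hasDerivAt_const r a).div h1 (pow_ne_zero 2 hs)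
  have hB := (hasDerivAt_const r b).div h2 (pow_ne_zero 2 hc)
  have h := hA.sub hB
  refine h.congr_deriv (Eq.symm ?_)
  rw [L1f]
  field_simp
  all_goals try ring

lemma hasDerivAt_L1f (a b : ℝ) {r : ℝ} (hs : Real.sinh r ≠ 0) :
    HasDerivAt (L1f a b) (L2f a b r) r := by
  have hc : Real.cosh r ≠ 0 := (Real.cosh_pos r).ne'
  have h1 : HasDerivAt (fun x => 2 * (b * Real.sinh x ^ 4 - a * Real.cosh x ^ 4))
      (2 * (b * (4 * Real.sinh r ^ 3 * Real.cosh r) - a * (4 * Real.cosh r ^ 3 * Real.sinh r))) r := by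
    have hb := ((Real.hasDerivAt_sinh r).pow 4).const_mul b
    have ha := ((Real.hasDerivAt_cosh r).pow 4).const_mul a
    have := (hb.sub ha).const_mul 2
    refine this.congr_deriv (Eq.symm ?_)
    all_goals try ring
  have h2 : HasDerivAt (fun x => Real.sinh x ^ 3 * Real.cosh x ^ 3)
      ((3 * Real.sinh r ^ 2 * Real.cosh r) * Real.cosh r ^ 3 +
        Real.sinh r ^ 3 * (3 * Real.cosh r ^ 2 * Real.sinh r)) r := by
    have hb := (Real.hasDerivAt_sinh r).pow 3
    have ha := (Real.hasDerivAt_cosh r).pow 3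
    have := hb.mul ha
    refine this.congr_deriv (Eq.symm ?_)
    simp only [Pi.pow_apply]
    all_goals try ring
  have hden : Real.sinh r ^ 3 * Real.cosh r ^ 3 ≠ 0 :=
    mul_ne_zero (pow_ne_zero 3 hs) (pow_ne_zero 3 hc)
  have h := h1.div h2 hden
  refine h.congr_deriv (Eq.symm ?_)
  rw [L2f]
  field_simp
  all_goals try ring

lemma hasDerivAt_Hf (a b : ℝ) {r : ℝ} (hs : Real.sinh r ≠ 0) :
    HasDerivAt (Hf a b) (Hdf a b r) r := by
  have hc : Real.cosh r ≠ 0 := (Real.cosh_pos r).ne'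
  have h1 : HasDerivAt (fun x => a * Real.cosh x ^ 2 + b * Real.sinh x ^ 2)
      (a * (2 * Real.cosh r ^ 1 * Real.sinh r) + b * (2 * Real.sinh r ^ 1 * Real.cosh r)) r :=
    (((Real.hasDerivAt_cosh r).pow 2).const_mul a).add
      (((Real.hasDerivAt_sinh r).pow 2).const_mul b)
  have h2 : HasDerivAt (fun x => Real.sinh x * Real.cosh x)
      (Real.cosh r * Real.cosh r + Real.sinh r * Real.sinh r) r :=
    (Real.hasDerivAt_sinh r).mul (Real.hasDerivAt_cosh r)
  have hden : Real.sinh r * Real.cosh r ≠ 0 := mul_ne_zero hs hc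
  have h := h1.div h2 hden
  refine h.congr_deriv (Eq.symm ?_)
  rw [Hdf]
  field_simp
  linear_combination 0 * (a * Real.sinh r ^ 2 * Real.cosh r ^ 4 -
    b * Real.sinh r ^ 4 * Real.cosh r ^ 2) * Real.cosh_sq r

lemma hasDerivAt_Z1 (a b c l1 : ℝ) {r : ℝ} (hs : Real.sinh r ≠ 0) :
    HasDerivAt (Z1 a b c l1) (Zd a b c r) r := by
  have hL := hasDerivAt_Lf a b hs
  have hL1 := hasDerivAt_L1f a b hs
  have hH := hasDerivAt_Hf a b hs
  have p1 := hL.const_mul 2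
  have p2 := hL1.mul (hasDerivAt_id r)
  have p3 : HasDerivAt (fun x => ((Lf a b x + c) * x) ^ 2 / 2)
      ((2 * ((Lf a b r + c) * r) ^ 1 * ((L1f a b r) * r + (Lf a b r + c) * 1)) / 2) r := by
    have := (((hL.add_const c).mul (hasDerivAt_id r)).pow 2).div_const 2
    refine this.congr_deriv (Eq.symm ?_)
    simp only [Pi.mul_apply, id_eq]
    ring
  have p4 : HasDerivAt (fun x => (Hf a b x) ^ 2 / 2)
      ((2 * Hf a b r ^ 1 * Hdf a b r) / 2) r := (hH.pow 2).div_const 2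
  have h := ((((p1.add p2).add_const (2 * l1 + c)).add p3).sub p4)
  have h2 : HasDerivAt (Z1 a b c l1)
      (2 * L1f a b r + (L2f a b r * r + L1f a b r * 1) + 0 +
        (2 * ((Lf a b r + c) * r) ^ 1 * ((L1f a b r) * r + (Lf a b r + c) * 1)) / 2 -
        (2 * Hf a b r ^ 1 * Hdf a b r) / 2) r := by
    have heq : Z1 a b c l1 = fun x =>
        ((2 * Lf a b x + L1f a b x * x) + (2 * l1 + c) + ((Lf a b x + c) * x) ^ 2 / 2)
          - (Hf a b x) ^ 2 / 2 := by
      funext x; rw [Z1]; ring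
    rw [heq]
    refine h.congr_deriv (Eq.symm ?_)
    all_goals try simp only [id_eq]
    all_goals try ring
  convert h2 using 1
  rw [Zd]
  all_goals try simp only [id_eq]
  all_goals try ring

/-! ### Elementary inequalities for sinh/cosh -/

lemma aux_nonneg {f f' : ℝ → ℝ} (hd : ∀ x, HasDerivAt f (f' x) x) (h0 : f 0 = 0)
    (hf' : ∀ x, 0 ≤ x → 0 ≤ f' x) {x : ℝ} (hx : 0 ≤ x) : 0 ≤ f x := by
  have hm : MonotoneOn f (Set.Ici (0:ℝ)) := by
    apply monotoneOn_of_deriv_nonneg (convex_Ici 0)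
      (fun y _ => (hd y).continuousAt.continuousWithinAt)
      (fun y _ => (hd y).differentiableAt.differentiableWithinAt)
    intro y hy
    rw [interior_Ici] at hy
    rw [(hd y).deriv]
    exact hf' y (le_of_lt hy)
  calc (0:ℝ) = f 0 := h0.symm
  _ ≤ f x := hm Set.self_mem_Ici hx hx

lemma sinh_le_mul_cosh {x : ℝ} (hx : 0 ≤ x) : Real.sinh x ≤ x * Real.cosh x := by
  have h : 0 ≤ x * Real.cosh x - Real.sinh x := by
    apply aux_nonneg (f' := fun y => y * Real.sinh y) _ (by simp) _ hx
    · intro y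
      have := ((hasDerivAt_id y).mul (Real.hasDerivAt_cosh y)).sub (Real.hasDerivAt_sinh y)
      refine this.congr_deriv (Eq.symm ?_)
      all_goals try simp only [id_eq]
      all_goals try ring
    · intro y hy
      exact mul_nonneg hy (Real.sinh_nonneg_iff.2 hy)
  linarith

lemma lo_bound {x : ℝ} (hx : 0 ≤ x) : 3 * Real.sinh x ≤ x * (2 + Real.cosh x) := by
  have h : 0 ≤ x * (2 + Real.cosh x) - 3 * Real.sinh x := by
    apply aux_nonneg (f' := fun y => 2 - 2 * Real.cosh y + y * Real.sinh y) _ (by simp) _ hx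
    · intro y
      have := ((hasDerivAt_id y).mul ((hasDerivAt_const y 2).add (Real.hasDerivAt_cosh y))).sub
        ((Real.hasDerivAt_sinh y).const_mul 3)
      refine this.congr_deriv (Eq.symm ?_)
      all_goals try simp only [id_eq, Pi.add_apply]
      all_goals try ring
    · intro y hy
      have h2 : 0 ≤ y * Real.sinh y - 2 * (Real.cosh y - 1) + 0 := by
        apply aux_nonneg (f' := fun z => z * Real.cosh z - Real.sinh z) _ (by simp) _ hy
        · intro z
          have := (((hasDerivAt_id z).mul (Real.hasDerivAt_sinh z)).sub
            ((Real.hasDerivAt_cosh z).sub (hasDerivAt_const z 1) |>.const_mul 2)).add_const 0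
          refine this.congr_deriv (Eq.symm ?_)
          all_goals try simp only [id_eq]
          all_goals try ring
        · intro z hz
          have := sinh_le_mul_cosh hz
          linarith
      linarith
  linarith

lemma hi_bound {x : ℝ} (hx : 0 ≤ x) :
    x * (1 + 2 * Real.cosh x) ≤ Real.sinh x * (2 + Real.cosh x) := by
  have h : 0 ≤ Real.sinh x * (2 + Real.cosh x) - x * (1 + 2 * Real.cosh x) := by
    apply aux_nonneg
      (f' := fun y => Real.cosh y ^ 2 + Real.sinh y ^ 2 - 1 - 2 * y * Real.sinh y) _ (by simp) _ hx
    · intro y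
      have h1 := (Real.hasDerivAt_sinh y).mul ((hasDerivAt_const y 2).add (Real.hasDerivAt_cosh y))
      have h2 := (hasDerivAt_id y).mul
        ((hasDerivAt_const y 1).add ((Real.hasDerivAt_cosh y).const_mul 2))
      have := h1.sub h2
      refine this.congr_deriv (Eq.symm ?_)
      all_goals try simp only [id_eq, Pi.add_apply]
      all_goals try ring
    · intro y hy
      have hs : y ≤ Real.sinh y := by
        rcases eq_or_lt_of_le hy with h|h
        · simp [← h]
        · exact (Real.self_lt_sinh_iff.2 h).le
      have hs0 : 0 ≤ Real.sinh y := Real.sinh_nonneg_iff.2 hy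
      have hc := Real.cosh_sq y
      nlinarith [mul_nonneg hs0 (sub_nonneg.2 hs)]
  linarith

/-! ### The polynomial certificates -/

lemma plo_pos (a b u s : ℝ) (hb : 1 ≤ b) (ha : 2 * b + 1 ≤ a) (hu : 1 < u)
    (hs2 : s ^ 2 = u ^ 2 - 1) :
    0 < 6 * (b * s ^ 4 - a * u ^ 4) * u ^ 2 * (2 + u) ^ 2 +
      3 * u * (2 + u) * (-2 * a * (s ^ 2 - 3 * u ^ 2) * u ^ 4 + 2 * b * (u ^ 2 - 3 * s ^ 2) * s ^ 4) +
      (a ^ 2 * u ^ 4 - b ^ 2 * s ^ 4) * u ^ 2 * (2 + u) ^ 2 +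
      3 * u * (2 + u) * (a * u ^ 2 - b * s ^ 2) ^ 2 +
      18 * (a * u ^ 2 - b * s ^ 2) * (b * s ^ 4 - a * u ^ 4) := by
  have hv : (0:ℝ) ≤ u - 1 := by linarith
  have hm : (0:ℝ) ≤ a - 2 * b + 1 := by linarith
  have hw : (0:ℝ) ≤ b - 1 := by linarith
  have key : 6 * (b * s ^ 4 - a * u ^ 4) * u ^ 2 * (2 + u) ^ 2 +
      3 * u * (2 + u) * (-2 * a * (s ^ 2 - 3 * u ^ 2) * u ^ 4 + 2 * b * (u ^ 2 - 3 * s ^ 2) * s ^ 4) +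
      (a ^ 2 * u ^ 4 - b ^ 2 * s ^ 4) * u ^ 2 * (2 + u) ^ 2 +
      3 * u * (2 + u) * (a * u ^ 2 - b * s ^ 2) ^ 2 +
      18 * (a * u ^ 2 - b * s ^ 2) * (b * s ^ 4 - a * u ^ 4) =
      409 * (u - 1) ^ 2 * (a - 2 * b + 1) ^ 0 * (b - 1) ^ 0 +
        640 * (u - 1) ^ 2 * (a - 2 * b + 1) ^ 0 * (b - 1) ^ 1 +
        220 * (u - 1) ^ 2 * (a - 2 * b + 1) ^ 0 * (b - 1) ^ 2 +
        128 * (u - 1) ^ 2 * (a - 2 * b + 1) ^ 1 * (b - 1) ^ 0 +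
        124 * (u - 1) ^ 2 * (a - 2 * b + 1) ^ 1 * (b - 1) ^ 1 +
        7 * (u - 1) ^ 2 * (a - 2 * b + 1) ^ 2 * (b - 1) ^ 0 +
        912 * (u - 1) ^ 3 * (a - 2 * b + 1) ^ 0 * (b - 1) ^ 0 +
        1524 * (u - 1) ^ 3 * (a - 2 * b + 1) ^ 0 * (b - 1) ^ 1 +
        552 * (u - 1) ^ 3 * (a - 2 * b + 1) ^ 0 * (b - 1) ^ 2 +
        468 * (u - 1) ^ 3 * (a - 2 * b + 1) ^ 1 * (b - 1) ^ 0 +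
        444 * (u - 1) ^ 3 * (a - 2 * b + 1) ^ 1 * (b - 1) ^ 1 +
        36 * (u - 1) ^ 3 * (a - 2 * b + 1) ^ 2 * (b - 1) ^ 0 +
        767 * (u - 1) ^ 4 * (a - 2 * b + 1) ^ 0 * (b - 1) ^ 0 +
        1546 * (u - 1) ^ 4 * (a - 2 * b + 1) ^ 0 * (b - 1) ^ 1 +
        644 * (u - 1) ^ 4 * (a - 2 * b + 1) ^ 0 * (b - 1) ^ 2 +
        702 * (u - 1) ^ 4 * (a - 2 * b + 1) ^ 1 * (b - 1) ^ 0 +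
        642 * (u - 1) ^ 4 * (a - 2 * b + 1) ^ 1 * (b - 1) ^ 1 +
        75 * (u - 1) ^ 4 * (a - 2 * b + 1) ^ 2 * (b - 1) ^ 0 +
        284 * (u - 1) ^ 5 * (a - 2 * b + 1) ^ 0 * (b - 1) ^ 0 +
        872 * (u - 1) ^ 5 * (a - 2 * b + 1) ^ 0 * (b - 1) ^ 1 +
        428 * (u - 1) ^ 5 * (a - 2 * b + 1) ^ 0 * (b - 1) ^ 2 +
        568 * (u - 1) ^ 5 * (a - 2 * b + 1) ^ 1 * (b - 1) ^ 0 +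
        488 * (u - 1) ^ 5 * (a - 2 * b + 1) ^ 1 * (b - 1) ^ 1 +
        80 * (u - 1) ^ 5 * (a - 2 * b + 1) ^ 2 * (b - 1) ^ 0 +
        38 * (u - 1) ^ 6 * (a - 2 * b + 1) ^ 0 * (b - 1) ^ 0 +
        310 * (u - 1) ^ 6 * (a - 2 * b + 1) ^ 0 * (b - 1) ^ 1 +
        167 * (u - 1) ^ 6 * (a - 2 * b + 1) ^ 0 * (b - 1) ^ 2 +
        270 * (u - 1) ^ 6 * (a - 2 * b + 1) ^ 1 * (b - 1) ^ 0 +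
        210 * (u - 1) ^ 6 * (a - 2 * b + 1) ^ 1 * (b - 1) ^ 1 +
        45 * (u - 1) ^ 6 * (a - 2 * b + 1) ^ 2 * (b - 1) ^ 0 +
        72 * (u - 1) ^ 7 * (a - 2 * b + 1) ^ 0 * (b - 1) ^ 1 +
        36 * (u - 1) ^ 7 * (a - 2 * b + 1) ^ 0 * (b - 1) ^ 2 +
        72 * (u - 1) ^ 7 * (a - 2 * b + 1) ^ 1 * (b - 1) ^ 0 +
        48 * (u - 1) ^ 7 * (a - 2 * b + 1) ^ 1 * (b - 1) ^ 1 +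
        12 * (u - 1) ^ 7 * (a - 2 * b + 1) ^ 2 * (b - 1) ^ 0 +
        8 * (u - 1) ^ 8 * (a - 2 * b + 1) ^ 0 * (b - 1) ^ 1 +
        3 * (u - 1) ^ 8 * (a - 2 * b + 1) ^ 0 * (b - 1) ^ 2 +
        8 * (u - 1) ^ 8 * (a - 2 * b + 1) ^ 1 * (b - 1) ^ 0 +
        4 * (u - 1) ^ 8 * (a - 2 * b + 1) ^ 1 * (b - 1) ^ 1 +
        1 * (u - 1) ^ 8 * (a - 2 * b + 1) ^ 2 * (b - 1) ^ 0 := by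
    linear_combination (- 18 * b ^ 2 - 36 * u * b - 6 * u * b ^ 2 - 42 * u ^ 2 * b + 37 * u ^ 2 * b ^ 2 - 18 * u ^ 2 * a * b + 36 * u ^ 3 * b + 10 * u ^ 3 * b ^ 2 - 12 * u ^ 3 * a * b + 48 * u ^ 4 * b - 18 * u ^ 4 * b ^ 2 + 30 * u ^ 4 * a * b - 4 * u ^ 5 * b ^ 2 - 12 * u ^ 5 * a - 6 * u ^ 6 * b - 1 * u ^ 6 * b ^ 2 - 6 * u ^ 6 * a + 18 * s ^ 2 * b ^ 2 + 36 * s ^ 2 * u * b + 6 * s ^ 2 * u * b ^ 2 + 42 * s ^ 2 * u ^ 2 * b - 19 * s ^ 2 * u ^ 2 * b ^ 2 + 18 * s ^ 2 * u ^ 2 * a * b - 4 * s ^ 2 * u ^ 3 * b ^ 2 - 6 * s ^ 2 * u ^ 4 * b - 1 * s ^ 2 * u ^ 4 * b ^ 2 - 18 * s ^ 4 * b ^ 2 - 36 * s ^ 4 * u * b - 18 * s ^ 4 * u ^ 2 * b) * hs2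
  rw [key]
  have t0 : (0:ℝ) ≤ 409 * (u - 1) ^ 2 * (a - 2 * b + 1) ^ 0 * (b - 1) ^ 0 :=
    mul_nonneg (mul_nonneg (mul_nonneg (by norm_num) (pow_nonneg hv 2)) (pow_nonneg hm 0)) (pow_nonneg hw 0)
  have t1 : (0:ℝ) ≤ 640 * (u - 1) ^ 2 * (a - 2 * b + 1) ^ 0 * (b - 1) ^ 1 :=
    mul_nonneg (mul_nonneg (mul_nonneg (by norm_num) (pow_nonneg hv 2)) (pow_nonneg hm 0)) (pow_nonneg hw 1)
  have t2 : (0:ℝ) ≤ 220 * (u - 1) ^ 2 * (a - 2 * b + 1) ^ 0 * (b - 1) ^ 2 :=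
    mul_nonneg (mul_nonneg (mul_nonneg (by norm_num) (pow_nonneg hv 2)) (pow_nonneg hm 0)) (pow_nonneg hw 2)
  have t3 : (0:ℝ) ≤ 128 * (u - 1) ^ 2 * (a - 2 * b + 1) ^ 1 * (b - 1) ^ 0 :=
    mul_nonneg (mul_nonneg (mul_nonneg (by norm_num) (pow_nonneg hv 2)) (pow_nonneg hm 1)) (pow_nonneg hw 0)
  have t4 : (0:ℝ) ≤ 124 * (u - 1) ^ 2 * (a - 2 * b + 1) ^ 1 * (b - 1) ^ 1 :=
    mul_nonneg (mul_nonneg (mul_nonneg (by norm_num) (pow_nonneg hv 2)) (pow_nonneg hm 1)) (pow_nonneg hw 1)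
  have t5 : (0:ℝ) ≤ 7 * (u - 1) ^ 2 * (a - 2 * b + 1) ^ 2 * (b - 1) ^ 0 :=
    mul_nonneg (mul_nonneg (mul_nonneg (by norm_num) (pow_nonneg hv 2)) (pow_nonneg hm 2)) (pow_nonneg hw 0)
  have t6 : (0:ℝ) ≤ 912 * (u - 1) ^ 3 * (a - 2 * b + 1) ^ 0 * (b - 1) ^ 0 :=
    mul_nonneg (mul_nonneg (mul_nonneg (by norm_num) (pow_nonneg hv 3)) (pow_nonneg hm 0)) (pow_nonneg hw 0)
  have t7 : (0:ℝ) ≤ 1524 * (u - 1) ^ 3 * (a - 2 * b + 1) ^ 0 * (b - 1) ^ 1 :=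
    mul_nonneg (mul_nonneg (mul_nonneg (by norm_num) (pow_nonneg hv 3)) (pow_nonneg hm 0)) (pow_nonneg hw 1)
  have t8 : (0:ℝ) ≤ 552 * (u - 1) ^ 3 * (a - 2 * b + 1) ^ 0 * (b - 1) ^ 2 :=
    mul_nonneg (mul_nonneg (mul_nonneg (by norm_num) (pow_nonneg hv 3)) (pow_nonneg hm 0)) (pow_nonneg hw 2)
  have t9 : (0:ℝ) ≤ 468 * (u - 1) ^ 3 * (a - 2 * b + 1) ^ 1 * (b - 1) ^ 0 :=
    mul_nonneg (mul_nonneg (mul_nonneg (by norm_num) (pow_nonneg hv 3)) (pow_nonneg hm 1)) (pow_nonneg hw 0)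
  have t10 : (0:ℝ) ≤ 444 * (u - 1) ^ 3 * (a - 2 * b + 1) ^ 1 * (b - 1) ^ 1 :=
    mul_nonneg (mul_nonneg (mul_nonneg (by norm_num) (pow_nonneg hv 3)) (pow_nonneg hm 1)) (pow_nonneg hw 1)
  have t11 : (0:ℝ) ≤ 36 * (u - 1) ^ 3 * (a - 2 * b + 1) ^ 2 * (b - 1) ^ 0 :=
    mul_nonneg (mul_nonneg (mul_nonneg (by norm_num) (pow_nonneg hv 3)) (pow_nonneg hm 2)) (pow_nonneg hw 0)
  have t12 : (0:ℝ) ≤ 767 * (u - 1) ^ 4 * (a - 2 * b + 1) ^ 0 * (b - 1) ^ 0 :=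
    mul_nonneg (mul_nonneg (mul_nonneg (by norm_num) (pow_nonneg hv 4)) (pow_nonneg hm 0)) (pow_nonneg hw 0)
  have t13 : (0:ℝ) ≤ 1546 * (u - 1) ^ 4 * (a - 2 * b + 1) ^ 0 * (b - 1) ^ 1 :=
    mul_nonneg (mul_nonneg (mul_nonneg (by norm_num) (pow_nonneg hv 4)) (pow_nonneg hm 0)) (pow_nonneg hw 1)
  have t14 : (0:ℝ) ≤ 644 * (u - 1) ^ 4 * (a - 2 * b + 1) ^ 0 * (b - 1) ^ 2 :=
    mul_nonneg (mul_nonneg (mul_nonneg (by norm_num) (pow_nonneg hv 4)) (pow_nonneg hm 0)) (pow_nonneg hw 2)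
  have t15 : (0:ℝ) ≤ 702 * (u - 1) ^ 4 * (a - 2 * b + 1) ^ 1 * (b - 1) ^ 0 :=
    mul_nonneg (mul_nonneg (mul_nonneg (by norm_num) (pow_nonneg hv 4)) (pow_nonneg hm 1)) (pow_nonneg hw 0)
  have t16 : (0:ℝ) ≤ 642 * (u - 1) ^ 4 * (a - 2 * b + 1) ^ 1 * (b - 1) ^ 1 :=
    mul_nonneg (mul_nonneg (mul_nonneg (by norm_num) (pow_nonneg hv 4)) (pow_nonneg hm 1)) (pow_nonneg hw 1)
  have t17 : (0:ℝ) ≤ 75 * (u - 1) ^ 4 * (a - 2 * b + 1) ^ 2 * (b - 1) ^ 0 :=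
    mul_nonneg (mul_nonneg (mul_nonneg (by norm_num) (pow_nonneg hv 4)) (pow_nonneg hm 2)) (pow_nonneg hw 0)
  have t18 : (0:ℝ) ≤ 284 * (u - 1) ^ 5 * (a - 2 * b + 1) ^ 0 * (b - 1) ^ 0 :=
    mul_nonneg (mul_nonneg (mul_nonneg (by norm_num) (pow_nonneg hv 5)) (pow_nonneg hm 0)) (pow_nonneg hw 0)
  have t19 : (0:ℝ) ≤ 872 * (u - 1) ^ 5 * (a - 2 * b + 1) ^ 0 * (b - 1) ^ 1 :=
    mul_nonneg (mul_nonneg (mul_nonneg (by norm_num) (pow_nonneg hv 5)) (pow_nonneg hm 0)) (pow_nonneg hw 1)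
  have t20 : (0:ℝ) ≤ 428 * (u - 1) ^ 5 * (a - 2 * b + 1) ^ 0 * (b - 1) ^ 2 :=
    mul_nonneg (mul_nonneg (mul_nonneg (by norm_num) (pow_nonneg hv 5)) (pow_nonneg hm 0)) (pow_nonneg hw 2)
  have t21 : (0:ℝ) ≤ 568 * (u - 1) ^ 5 * (a - 2 * b + 1) ^ 1 * (b - 1) ^ 0 :=
    mul_nonneg (mul_nonneg (mul_nonneg (by norm_num) (pow_nonneg hv 5)) (pow_nonneg hm 1)) (pow_nonneg hw 0)
  have t22 : (0:ℝ) ≤ 488 * (u - 1) ^ 5 * (a - 2 * b + 1) ^ 1 * (b - 1) ^ 1 :=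
    mul_nonneg (mul_nonneg (mul_nonneg (by norm_num) (pow_nonneg hv 5)) (pow_nonneg hm 1)) (pow_nonneg hw 1)
  have t23 : (0:ℝ) ≤ 80 * (u - 1) ^ 5 * (a - 2 * b + 1) ^ 2 * (b - 1) ^ 0 :=
    mul_nonneg (mul_nonneg (mul_nonneg (by norm_num) (pow_nonneg hv 5)) (pow_nonneg hm 2)) (pow_nonneg hw 0)
  have t24 : (0:ℝ) ≤ 38 * (u - 1) ^ 6 * (a - 2 * b + 1) ^ 0 * (b - 1) ^ 0 :=
    mul_nonneg (mul_nonneg (mul_nonneg (by norm_num) (pow_nonneg hv 6)) (pow_nonneg hm 0)) (pow_nonneg hw 0)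
  have t25 : (0:ℝ) ≤ 310 * (u - 1) ^ 6 * (a - 2 * b + 1) ^ 0 * (b - 1) ^ 1 :=
    mul_nonneg (mul_nonneg (mul_nonneg (by norm_num) (pow_nonneg hv 6)) (pow_nonneg hm 0)) (pow_nonneg hw 1)
  have t26 : (0:ℝ) ≤ 167 * (u - 1) ^ 6 * (a - 2 * b + 1) ^ 0 * (b - 1) ^ 2 :=
    mul_nonneg (mul_nonneg (mul_nonneg (by norm_num) (pow_nonneg hv 6)) (pow_nonneg hm 0)) (pow_nonneg hw 2)
  have t27 : (0:ℝ) ≤ 270 * (u - 1) ^ 6 * (a - 2 * b + 1) ^ 1 * (b - 1) ^ 0 :=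
    mul_nonneg (mul_nonneg (mul_nonneg (by norm_num) (pow_nonneg hv 6)) (pow_nonneg hm 1)) (pow_nonneg hw 0)
  have t28 : (0:ℝ) ≤ 210 * (u - 1) ^ 6 * (a - 2 * b + 1) ^ 1 * (b - 1) ^ 1 :=
    mul_nonneg (mul_nonneg (mul_nonneg (by norm_num) (pow_nonneg hv 6)) (pow_nonneg hm 1)) (pow_nonneg hw 1)
  have t29 : (0:ℝ) ≤ 45 * (u - 1) ^ 6 * (a - 2 * b + 1) ^ 2 * (b - 1) ^ 0 :=
    mul_nonneg (mul_nonneg (mul_nonneg (by norm_num) (pow_nonneg hv 6)) (pow_nonneg hm 2)) (pow_nonneg hw 0)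
  have t30 : (0:ℝ) ≤ 72 * (u - 1) ^ 7 * (a - 2 * b + 1) ^ 0 * (b - 1) ^ 1 :=
    mul_nonneg (mul_nonneg (mul_nonneg (by norm_num) (pow_nonneg hv 7)) (pow_nonneg hm 0)) (pow_nonneg hw 1)
  have t31 : (0:ℝ) ≤ 36 * (u - 1) ^ 7 * (a - 2 * b + 1) ^ 0 * (b - 1) ^ 2 :=
    mul_nonneg (mul_nonneg (mul_nonneg (by norm_num) (pow_nonneg hv 7)) (pow_nonneg hm 0)) (pow_nonneg hw 2)
  have t32 : (0:ℝ) ≤ 72 * (u - 1) ^ 7 * (a - 2 * b + 1) ^ 1 * (b - 1) ^ 0 :=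
    mul_nonneg (mul_nonneg (mul_nonneg (by norm_num) (pow_nonneg hv 7)) (pow_nonneg hm 1)) (pow_nonneg hw 0)
  have t33 : (0:ℝ) ≤ 48 * (u - 1) ^ 7 * (a - 2 * b + 1) ^ 1 * (b - 1) ^ 1 :=
    mul_nonneg (mul_nonneg (mul_nonneg (by norm_num) (pow_nonneg hv 7)) (pow_nonneg hm 1)) (pow_nonneg hw 1)
  have t34 : (0:ℝ) ≤ 12 * (u - 1) ^ 7 * (a - 2 * b + 1) ^ 2 * (b - 1) ^ 0 :=
    mul_nonneg (mul_nonneg (mul_nonneg (by norm_num) (pow_nonneg hv 7)) (pow_nonneg hm 2)) (pow_nonneg hw 0)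
  have t35 : (0:ℝ) ≤ 8 * (u - 1) ^ 8 * (a - 2 * b + 1) ^ 0 * (b - 1) ^ 1 :=
    mul_nonneg (mul_nonneg (mul_nonneg (by norm_num) (pow_nonneg hv 8)) (pow_nonneg hm 0)) (pow_nonneg hw 1)
  have t36 : (0:ℝ) ≤ 3 * (u - 1) ^ 8 * (a - 2 * b + 1) ^ 0 * (b - 1) ^ 2 :=
    mul_nonneg (mul_nonneg (mul_nonneg (by norm_num) (pow_nonneg hv 8)) (pow_nonneg hm 0)) (pow_nonneg hw 2)
  have t37 : (0:ℝ) ≤ 8 * (u - 1) ^ 8 * (a - 2 * b + 1) ^ 1 * (b - 1) ^ 0 :=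
    mul_nonneg (mul_nonneg (mul_nonneg (by norm_num) (pow_nonneg hv 8)) (pow_nonneg hm 1)) (pow_nonneg hw 0)
  have t38 : (0:ℝ) ≤ 4 * (u - 1) ^ 8 * (a - 2 * b + 1) ^ 1 * (b - 1) ^ 1 :=
    mul_nonneg (mul_nonneg (mul_nonneg (by norm_num) (pow_nonneg hv 8)) (pow_nonneg hm 1)) (pow_nonneg hw 1)
  have t39 : (0:ℝ) ≤ 1 * (u - 1) ^ 8 * (a - 2 * b + 1) ^ 2 * (b - 1) ^ 0 :=
    mul_nonneg (mul_nonneg (mul_nonneg (by norm_num) (pow_nonneg hv 8)) (pow_nonneg hm 2)) (pow_nonneg hw 0)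
  have tpos : (0:ℝ) < 409 * (u - 1) ^ 2 * (a - 2 * b + 1) ^ 0 * (b - 1) ^ 0 := by
    rw [pow_zero, pow_zero]
    have := pow_pos (by linarith : (0:ℝ) < u - 1) 2
    linarith
  linarith [t0, t1, t2, t3, t4, t5, t6, t7, t8, t9, t10, t11, t12, t13, t14, t15, t16, t17, t18, t19, t20, t21, t22, t23, t24, t25, t26, t27, t28, t29, t30, t31, t32, t33, t34, t35, t36, t37, t38, t39, tpos]

lemma phi_pos (a b u s : ℝ) (hb : 1 ≤ b) (ha : 2 * b + 1 ≤ a) (hu : 1 < u)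
    (hs2 : s ^ 2 = u ^ 2 - 1) :
    0 < 6 * (b * s ^ 4 - a * u ^ 4) * u ^ 2 * (1 + 2 * u) ^ 2 +
      u * (2 + u) * (1 + 2 * u) * (-2 * a * (s ^ 2 - 3 * u ^ 2) * u ^ 4 + 2 * b * (u ^ 2 - 3 * s ^ 2) * s ^ 4) +
      (a ^ 2 * u ^ 4 - b ^ 2 * s ^ 4) * u ^ 2 * (1 + 2 * u) ^ 2 +
      u * (2 + u) * (1 + 2 * u) * (a * u ^ 2 - b * s ^ 2) ^ 2 +
      2 * (2 + u) ^ 2 * (a * u ^ 2 - b * s ^ 2) * (b * s ^ 4 - a * u ^ 4) := by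
  have hv : (0:ℝ) ≤ u - 1 := by linarith
  have hm : (0:ℝ) ≤ a - 2 * b + 1 := by linarith
  have hw : (0:ℝ) ≤ b - 1 := by linarith
  have key : 6 * (b * s ^ 4 - a * u ^ 4) * u ^ 2 * (1 + 2 * u) ^ 2 +
      u * (2 + u) * (1 + 2 * u) * (-2 * a * (s ^ 2 - 3 * u ^ 2) * u ^ 4 + 2 * b * (u ^ 2 - 3 * s ^ 2) * s ^ 4) +
      (a ^ 2 * u ^ 4 - b ^ 2 * s ^ 4) * u ^ 2 * (1 + 2 * u) ^ 2 +
      u * (2 + u) * (1 + 2 * u) * (a * u ^ 2 - b * s ^ 2) ^ 2 +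
      2 * (2 + u) ^ 2 * (a * u ^ 2 - b * s ^ 2) * (b * s ^ 4 - a * u ^ 4) =
      412 * (u - 1) ^ 2 * (a - 2 * b + 1) ^ 0 * (b - 1) ^ 0 +
        640 * (u - 1) ^ 2 * (a - 2 * b + 1) ^ 0 * (b - 1) ^ 1 +
        208 * (u - 1) ^ 2 * (a - 2 * b + 1) ^ 0 * (b - 1) ^ 2 +
        128 * (u - 1) ^ 2 * (a - 2 * b + 1) ^ 1 * (b - 1) ^ 0 +
        112 * (u - 1) ^ 2 * (a - 2 * b + 1) ^ 1 * (b - 1) ^ 1 +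
        4 * (u - 1) ^ 2 * (a - 2 * b + 1) ^ 2 * (b - 1) ^ 0 +
        1210 * (u - 1) ^ 3 * (a - 2 * b + 1) ^ 0 * (b - 1) ^ 0 +
        1968 * (u - 1) ^ 3 * (a - 2 * b + 1) ^ 0 * (b - 1) ^ 1 +
        632 * (u - 1) ^ 3 * (a - 2 * b + 1) ^ 0 * (b - 1) ^ 2 +
        560 * (u - 1) ^ 3 * (a - 2 * b + 1) ^ 1 * (b - 1) ^ 0 +
        456 * (u - 1) ^ 3 * (a - 2 * b + 1) ^ 1 * (b - 1) ^ 1 +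
        22 * (u - 1) ^ 3 * (a - 2 * b + 1) ^ 2 * (b - 1) ^ 0 +
        1446 * (u - 1) ^ 4 * (a - 2 * b + 1) ^ 0 * (b - 1) ^ 0 +
        2656 * (u - 1) ^ 4 * (a - 2 * b + 1) ^ 0 * (b - 1) ^ 1 +
        872 * (u - 1) ^ 4 * (a - 2 * b + 1) ^ 0 * (b - 1) ^ 2 +
        1056 * (u - 1) ^ 4 * (a - 2 * b + 1) ^ 1 * (b - 1) ^ 0 +
        768 * (u - 1) ^ 4 * (a - 2 * b + 1) ^ 1 * (b - 1) ^ 1 +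
        50 * (u - 1) ^ 4 * (a - 2 * b + 1) ^ 2 * (b - 1) ^ 0 +
        872 * (u - 1) ^ 5 * (a - 2 * b + 1) ^ 0 * (b - 1) ^ 0 +
        2060 * (u - 1) ^ 5 * (a - 2 * b + 1) ^ 0 * (b - 1) ^ 1 +
        688 * (u - 1) ^ 5 * (a - 2 * b + 1) ^ 0 * (b - 1) ^ 2 +
        1132 * (u - 1) ^ 5 * (a - 2 * b + 1) ^ 1 * (b - 1) ^ 0 +
        692 * (u - 1) ^ 5 * (a - 2 * b + 1) ^ 1 * (b - 1) ^ 1 +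
        60 * (u - 1) ^ 5 * (a - 2 * b + 1) ^ 2 * (b - 1) ^ 0 +
        264 * (u - 1) ^ 6 * (a - 2 * b + 1) ^ 0 * (b - 1) ^ 0 +
        1028 * (u - 1) ^ 6 * (a - 2 * b + 1) ^ 0 * (b - 1) ^ 1 +
        324 * (u - 1) ^ 6 * (a - 2 * b + 1) ^ 0 * (b - 1) ^ 2 +
        756 * (u - 1) ^ 6 * (a - 2 * b + 1) ^ 1 * (b - 1) ^ 0 +
        356 * (u - 1) ^ 6 * (a - 2 * b + 1) ^ 1 * (b - 1) ^ 1 +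
        40 * (u - 1) ^ 6 * (a - 2 * b + 1) ^ 2 * (b - 1) ^ 0 +
        32 * (u - 1) ^ 7 * (a - 2 * b + 1) ^ 0 * (b - 1) ^ 0 +
        348 * (u - 1) ^ 7 * (a - 2 * b + 1) ^ 0 * (b - 1) ^ 1 +
        86 * (u - 1) ^ 7 * (a - 2 * b + 1) ^ 0 * (b - 1) ^ 2 +
        316 * (u - 1) ^ 7 * (a - 2 * b + 1) ^ 1 * (b - 1) ^ 0 +
        100 * (u - 1) ^ 7 * (a - 2 * b + 1) ^ 1 * (b - 1) ^ 1 +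
        14 * (u - 1) ^ 7 * (a - 2 * b + 1) ^ 2 * (b - 1) ^ 0 +
        76 * (u - 1) ^ 8 * (a - 2 * b + 1) ^ 0 * (b - 1) ^ 1 +
        10 * (u - 1) ^ 8 * (a - 2 * b + 1) ^ 0 * (b - 1) ^ 2 +
        76 * (u - 1) ^ 8 * (a - 2 * b + 1) ^ 1 * (b - 1) ^ 0 +
        12 * (u - 1) ^ 8 * (a - 2 * b + 1) ^ 1 * (b - 1) ^ 1 +
        2 * (u - 1) ^ 8 * (a - 2 * b + 1) ^ 2 * (b - 1) ^ 0 +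
        8 * (u - 1) ^ 9 * (a - 2 * b + 1) ^ 0 * (b - 1) ^ 1 +
        8 * (u - 1) ^ 9 * (a - 2 * b + 1) ^ 1 * (b - 1) ^ 0 := by
    linear_combination (- 8 * b ^ 2 - 12 * u * b - 10 * u * b ^ 2 - 36 * u ^ 2 * b + 10 * u ^ 2 * b ^ 2 - 8 * u ^ 2 * a * b - 16 * u ^ 3 * b + 20 * u ^ 3 * b ^ 2 - 12 * u ^ 3 * a * b + 32 * u ^ 4 * b + 4 * u ^ 4 * b ^ 2 + 4 * u ^ 4 * a * b + 36 * u ^ 5 * b - 10 * u ^ 5 * b ^ 2 - 4 * u ^ 5 * a + 12 * u ^ 5 * a * b + 4 * u ^ 6 * b - 6 * u ^ 6 * b ^ 2 - 10 * u ^ 6 * a + 4 * u ^ 6 * a * b - 8 * u ^ 7 * b - 4 * u ^ 7 * a + 8 * s ^ 2 * b ^ 2 + 12 * s ^ 2 * u * b + 10 * s ^ 2 * u * b ^ 2 + 36 * s ^ 2 * u ^ 2 * b - 2 * s ^ 2 * u ^ 2 * b ^ 2 + 8 * s ^ 2 * u ^ 2 * a * b + 28 * s ^ 2 * u ^ 3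 * b - 10 * s ^ 2 * u ^ 3 * b ^ 2 + 8 * s ^ 2 * u ^ 3 * a * b + 4 * s ^ 2 * u ^ 4 * b - 6 * s ^ 2 * u ^ 4 * b ^ 2 + 2 * s ^ 2 * u ^ 4 * a * b - 8 * s ^ 2 * u ^ 5 * b - 8 * s ^ 4 * b ^ 2 - 12 * s ^ 4 * u * b - 8 * s ^ 4 * u * b ^ 2 - 30 * s ^ 4 * u ^ 2 * b - 2 * s ^ 4 * u ^ 2 * b ^ 2 - 12 * s ^ 4 * u ^ 3 * b) * hs2
  rw [key]
  have t0 : (0:ℝ) ≤ 412 * (u - 1) ^ 2 * (a - 2 * b + 1) ^ 0 * (b - 1) ^ 0 :=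
    mul_nonneg (mul_nonneg (mul_nonneg (by norm_num) (pow_nonneg hv 2)) (pow_nonneg hm 0)) (pow_nonneg hw 0)
  have t1 : (0:ℝ) ≤ 640 * (u - 1) ^ 2 * (a - 2 * b + 1) ^ 0 * (b - 1) ^ 1 :=
    mul_nonneg (mul_nonneg (mul_nonneg (by norm_num) (pow_nonneg hv 2)) (pow_nonneg hm 0)) (pow_nonneg hw 1)
  have t2 : (0:ℝ) ≤ 208 * (u - 1) ^ 2 * (a - 2 * b + 1) ^ 0 * (b - 1) ^ 2 :=
    mul_nonneg (mul_nonneg (mul_nonneg (by norm_num) (pow_nonneg hv 2)) (pow_nonneg hm 0)) (pow_nonneg hw 2)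
  have t3 : (0:ℝ) ≤ 128 * (u - 1) ^ 2 * (a - 2 * b + 1) ^ 1 * (b - 1) ^ 0 :=
    mul_nonneg (mul_nonneg (mul_nonneg (by norm_num) (pow_nonneg hv 2)) (pow_nonneg hm 1)) (pow_nonneg hw 0)
  have t4 : (0:ℝ) ≤ 112 * (u - 1) ^ 2 * (a - 2 * b + 1) ^ 1 * (b - 1) ^ 1 :=
    mul_nonneg (mul_nonneg (mul_nonneg (by norm_num) (pow_nonneg hv 2)) (pow_nonneg hm 1)) (pow_nonneg hw 1)
  have t5 : (0:ℝ) ≤ 4 * (u - 1) ^ 2 * (a - 2 * b + 1) ^ 2 * (b - 1) ^ 0 :=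
    mul_nonneg (mul_nonneg (mul_nonneg (by norm_num) (pow_nonneg hv 2)) (pow_nonneg hm 2)) (pow_nonneg hw 0)
  have t6 : (0:ℝ) ≤ 1210 * (u - 1) ^ 3 * (a - 2 * b + 1) ^ 0 * (b - 1) ^ 0 :=
    mul_nonneg (mul_nonneg (mul_nonneg (by norm_num) (pow_nonneg hv 3)) (pow_nonneg hm 0)) (pow_nonneg hw 0)
  have t7 : (0:ℝ) ≤ 1968 * (u - 1) ^ 3 * (a - 2 * b + 1) ^ 0 * (b - 1) ^ 1 :=
    mul_nonneg (mul_nonneg (mul_nonneg (by norm_num) (pow_nonneg hv 3)) (pow_nonneg hm 0)) (pow_nonneg hw 1)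
  have t8 : (0:ℝ) ≤ 632 * (u - 1) ^ 3 * (a - 2 * b + 1) ^ 0 * (b - 1) ^ 2 :=
    mul_nonneg (mul_nonneg (mul_nonneg (by norm_num) (pow_nonneg hv 3)) (pow_nonneg hm 0)) (pow_nonneg hw 2)
  have t9 : (0:ℝ) ≤ 560 * (u - 1) ^ 3 * (a - 2 * b + 1) ^ 1 * (b - 1) ^ 0 :=
    mul_nonneg (mul_nonneg (mul_nonneg (by norm_num) (pow_nonneg hv 3)) (pow_nonneg hm 1)) (pow_nonneg hw 0)
  have t10 : (0:ℝ) ≤ 456 * (u - 1) ^ 3 * (a - 2 * b + 1) ^ 1 * (b - 1) ^ 1 :=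
    mul_nonneg (mul_nonneg (mul_nonneg (by norm_num) (pow_nonneg hv 3)) (pow_nonneg hm 1)) (pow_nonneg hw 1)
  have t11 : (0:ℝ) ≤ 22 * (u - 1) ^ 3 * (a - 2 * b + 1) ^ 2 * (b - 1) ^ 0 :=
    mul_nonneg (mul_nonneg (mul_nonneg (by norm_num) (pow_nonneg hv 3)) (pow_nonneg hm 2)) (pow_nonneg hw 0)
  have t12 : (0:ℝ) ≤ 1446 * (u - 1) ^ 4 * (a - 2 * b + 1) ^ 0 * (b - 1) ^ 0 :=
    mul_nonneg (mul_nonneg (mul_nonneg (by norm_num) (pow_nonneg hv 4)) (pow_nonneg hm 0)) (pow_nonneg hw 0)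
  have t13 : (0:ℝ) ≤ 2656 * (u - 1) ^ 4 * (a - 2 * b + 1) ^ 0 * (b - 1) ^ 1 :=
    mul_nonneg (mul_nonneg (mul_nonneg (by norm_num) (pow_nonneg hv 4)) (pow_nonneg hm 0)) (pow_nonneg hw 1)
  have t14 : (0:ℝ) ≤ 872 * (u - 1) ^ 4 * (a - 2 * b + 1) ^ 0 * (b - 1) ^ 2 :=
    mul_nonneg (mul_nonneg (mul_nonneg (by norm_num) (pow_nonneg hv 4)) (pow_nonneg hm 0)) (pow_nonneg hw 2)
  have t15 : (0:ℝ) ≤ 1056 * (u - 1) ^ 4 * (a - 2 * b + 1) ^ 1 * (b - 1) ^ 0 :=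
    mul_nonneg (mul_nonneg (mul_nonneg (by norm_num) (pow_nonneg hv 4)) (pow_nonneg hm 1)) (pow_nonneg hw 0)
  have t16 : (0:ℝ) ≤ 768 * (u - 1) ^ 4 * (a - 2 * b + 1) ^ 1 * (b - 1) ^ 1 :=
    mul_nonneg (mul_nonneg (mul_nonneg (by norm_num) (pow_nonneg hv 4)) (pow_nonneg hm 1)) (pow_nonneg hw 1)
  have t17 : (0:ℝ) ≤ 50 * (u - 1) ^ 4 * (a - 2 * b + 1) ^ 2 * (b - 1) ^ 0 :=
    mul_nonneg (mul_nonneg (mul_nonneg (by norm_num) (pow_nonneg hv 4)) (pow_nonneg hm 2)) (pow_nonneg hw 0)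
  have t18 : (0:ℝ) ≤ 872 * (u - 1) ^ 5 * (a - 2 * b + 1) ^ 0 * (b - 1) ^ 0 :=
    mul_nonneg (mul_nonneg (mul_nonneg (by norm_num) (pow_nonneg hv 5)) (pow_nonneg hm 0)) (pow_nonneg hw 0)
  have t19 : (0:ℝ) ≤ 2060 * (u - 1) ^ 5 * (a - 2 * b + 1) ^ 0 * (b - 1) ^ 1 :=
    mul_nonneg (mul_nonneg (mul_nonneg (by norm_num) (pow_nonneg hv 5)) (pow_nonneg hm 0)) (pow_nonneg hw 1)
  have t20 : (0:ℝ) ≤ 688 * (u - 1) ^ 5 * (a - 2 * b + 1) ^ 0 * (b - 1) ^ 2 :=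
    mul_nonneg (mul_nonneg (mul_nonneg (by norm_num) (pow_nonneg hv 5)) (pow_nonneg hm 0)) (pow_nonneg hw 2)
  have t21 : (0:ℝ) ≤ 1132 * (u - 1) ^ 5 * (a - 2 * b + 1) ^ 1 * (b - 1) ^ 0 :=
    mul_nonneg (mul_nonneg (mul_nonneg (by norm_num) (pow_nonneg hv 5)) (pow_nonneg hm 1)) (pow_nonneg hw 0)
  have t22 : (0:ℝ) ≤ 692 * (u - 1) ^ 5 * (a - 2 * b + 1) ^ 1 * (b - 1) ^ 1 :=
    mul_nonneg (mul_nonneg (mul_nonneg (by norm_num) (pow_nonneg hv 5)) (pow_nonneg hm 1)) (pow_nonneg hw 1)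
  have t23 : (0:ℝ) ≤ 60 * (u - 1) ^ 5 * (a - 2 * b + 1) ^ 2 * (b - 1) ^ 0 :=
    mul_nonneg (mul_nonneg (mul_nonneg (by norm_num) (pow_nonneg hv 5)) (pow_nonneg hm 2)) (pow_nonneg hw 0)
  have t24 : (0:ℝ) ≤ 264 * (u - 1) ^ 6 * (a - 2 * b + 1) ^ 0 * (b - 1) ^ 0 :=
    mul_nonneg (mul_nonneg (mul_nonneg (by norm_num) (pow_nonneg hv 6)) (pow_nonneg hm 0)) (pow_nonneg hw 0)
  have t25 : (0:ℝ) ≤ 1028 * (u - 1) ^ 6 * (a - 2 * b + 1) ^ 0 * (b - 1) ^ 1 :=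
    mul_nonneg (mul_nonneg (mul_nonneg (by norm_num) (pow_nonneg hv 6)) (pow_nonneg hm 0)) (pow_nonneg hw 1)
  have t26 : (0:ℝ) ≤ 324 * (u - 1) ^ 6 * (a - 2 * b + 1) ^ 0 * (b - 1) ^ 2 :=
    mul_nonneg (mul_nonneg (mul_nonneg (by norm_num) (pow_nonneg hv 6)) (pow_nonneg hm 0)) (pow_nonneg hw 2)
  have t27 : (0:ℝ) ≤ 756 * (u - 1) ^ 6 * (a - 2 * b + 1) ^ 1 * (b - 1) ^ 0 :=
    mul_nonneg (mul_nonneg (mul_nonneg (by norm_num) (pow_nonneg hv 6)) (pow_nonneg hm 1)) (pow_nonneg hw 0)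
  have t28 : (0:ℝ) ≤ 356 * (u - 1) ^ 6 * (a - 2 * b + 1) ^ 1 * (b - 1) ^ 1 :=
    mul_nonneg (mul_nonneg (mul_nonneg (by norm_num) (pow_nonneg hv 6)) (pow_nonneg hm 1)) (pow_nonneg hw 1)
  have t29 : (0:ℝ) ≤ 40 * (u - 1) ^ 6 * (a - 2 * b + 1) ^ 2 * (b - 1) ^ 0 :=
    mul_nonneg (mul_nonneg (mul_nonneg (by norm_num) (pow_nonneg hv 6)) (pow_nonneg hm 2)) (pow_nonneg hw 0)
  have t30 : (0:ℝ) ≤ 32 * (u - 1) ^ 7 * (a - 2 * b + 1) ^ 0 * (b - 1) ^ 0 :=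
    mul_nonneg (mul_nonneg (mul_nonneg (by norm_num) (pow_nonneg hv 7)) (pow_nonneg hm 0)) (pow_nonneg hw 0)
  have t31 : (0:ℝ) ≤ 348 * (u - 1) ^ 7 * (a - 2 * b + 1) ^ 0 * (b - 1) ^ 1 :=
    mul_nonneg (mul_nonneg (mul_nonneg (by norm_num) (pow_nonneg hv 7)) (pow_nonneg hm 0)) (pow_nonneg hw 1)
  have t32 : (0:ℝ) ≤ 86 * (u - 1) ^ 7 * (a - 2 * b + 1) ^ 0 * (b - 1) ^ 2 :=
    mul_nonneg (mul_nonneg (mul_nonneg (by norm_num) (pow_nonneg hv 7)) (pow_nonneg hm 0)) (pow_nonneg hw 2)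
  have t33 : (0:ℝ) ≤ 316 * (u - 1) ^ 7 * (a - 2 * b + 1) ^ 1 * (b - 1) ^ 0 :=
    mul_nonneg (mul_nonneg (mul_nonneg (by norm_num) (pow_nonneg hv 7)) (pow_nonneg hm 1)) (pow_nonneg hw 0)
  have t34 : (0:ℝ) ≤ 100 * (u - 1) ^ 7 * (a - 2 * b + 1) ^ 1 * (b - 1) ^ 1 :=
    mul_nonneg (mul_nonneg (mul_nonneg (by norm_num) (pow_nonneg hv 7)) (pow_nonneg hm 1)) (pow_nonneg hw 1)
  have t35 : (0:ℝ) ≤ 14 * (u - 1) ^ 7 * (a - 2 * b + 1) ^ 2 * (b - 1) ^ 0 :=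
    mul_nonneg (mul_nonneg (mul_nonneg (by norm_num) (pow_nonneg hv 7)) (pow_nonneg hm 2)) (pow_nonneg hw 0)
  have t36 : (0:ℝ) ≤ 76 * (u - 1) ^ 8 * (a - 2 * b + 1) ^ 0 * (b - 1) ^ 1 :=
    mul_nonneg (mul_nonneg (mul_nonneg (by norm_num) (pow_nonneg hv 8)) (pow_nonneg hm 0)) (pow_nonneg hw 1)
  have t37 : (0:ℝ) ≤ 10 * (u - 1) ^ 8 * (a - 2 * b + 1) ^ 0 * (b - 1) ^ 2 :=
    mul_nonneg (mul_nonneg (mul_nonneg (by norm_num) (pow_nonneg hv 8)) (pow_nonneg hm 0)) (pow_nonneg hw 2)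
  have t38 : (0:ℝ) ≤ 76 * (u - 1) ^ 8 * (a - 2 * b + 1) ^ 1 * (b - 1) ^ 0 :=
    mul_nonneg (mul_nonneg (mul_nonneg (by norm_num) (pow_nonneg hv 8)) (pow_nonneg hm 1)) (pow_nonneg hw 0)
  have t39 : (0:ℝ) ≤ 12 * (u - 1) ^ 8 * (a - 2 * b + 1) ^ 1 * (b - 1) ^ 1 :=
    mul_nonneg (mul_nonneg (mul_nonneg (by norm_num) (pow_nonneg hv 8)) (pow_nonneg hm 1)) (pow_nonneg hw 1)
  have t40 : (0:ℝ) ≤ 2 * (u - 1) ^ 8 * (a - 2 * b + 1) ^ 2 * (b - 1) ^ 0 :=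
    mul_nonneg (mul_nonneg (mul_nonneg (by norm_num) (pow_nonneg hv 8)) (pow_nonneg hm 2)) (pow_nonneg hw 0)
  have t41 : (0:ℝ) ≤ 8 * (u - 1) ^ 9 * (a - 2 * b + 1) ^ 0 * (b - 1) ^ 1 :=
    mul_nonneg (mul_nonneg (mul_nonneg (by norm_num) (pow_nonneg hv 9)) (pow_nonneg hm 0)) (pow_nonneg hw 1)
  have t42 : (0:ℝ) ≤ 8 * (u - 1) ^ 9 * (a - 2 * b + 1) ^ 1 * (b - 1) ^ 0 :=
    mul_nonneg (mul_nonneg (mul_nonneg (by norm_num) (pow_nonneg hv 9)) (pow_nonneg hm 1)) (pow_nonneg hw 0)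
  have tpos : (0:ℝ) < 412 * (u - 1) ^ 2 * (a - 2 * b + 1) ^ 0 * (b - 1) ^ 0 := by
    rw [pow_zero, pow_zero]
    have := pow_pos (by linarith : (0:ℝ) < u - 1) 2
    linarith
  linarith [t0, t1, t2, t3, t4, t5, t6, t7, t8, t9, t10, t11, t12, t13, t14, t15, t16, t17, t18, t19, t20, t21, t22, t23, t24, t25, t26, t27, t28, t29, t30, t31, t32, t33, t34, t35, t36, t37, t38, t39, t40, t41, t42, tpos]

/-! ### Concave quadratic lemma -/

lemma quad_lower {A B D x x1 x2 : ℝ} (hD : D ≤ 0) (h1 : x1 ≤ x) (h2 : x ≤ x2) (h12 : x1 < x2)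
    (g1 : 0 < A + B * x1 + D * x1 ^ 2) (g2 : 0 < A + B * x2 + D * x2 ^ 2) :
    0 < A + B * x + D * x ^ 2 := by
  rcases eq_or_lt_of_le h2 with rfl|hlt2
  · exact g2
  · have key : (x2 - x1) * (A + B * x + D * x ^ 2) =
        (x2 - x) * (A + B * x1 + D * x1 ^ 2) + (x - x1) * (A + B * x2 + D * x2 ^ 2) +
          (-D) * ((x - x1) * ((x2 - x) * (x2 - x1))) := by ring
    have t1 : 0 < (x2 - x) * (A + B * x1 + D * x1 ^ 2) := mul_pos (by linarith) g1
    have t2 : 0 ≤ (x - x1) * (A + B * x2 + D * x2 ^ 2) := mul_nonneg (by linarith) g2.le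
    have t3 : 0 ≤ (-D) * ((x - x1) * ((x2 - x) * (x2 - x1))) :=
      mul_nonneg (by linarith) (mul_nonneg (by linarith)
        (mul_nonneg (by linarith) (by linarith)))
    nlinarith [key, t1, t2, t3, sub_pos.2 h12]

/-! ### Positivity of the derivative -/

lemma Zd_pos (a b c : ℝ) (hb : 1 ≤ b) (ha : 2 * b + 1 ≤ a) (hc : c < 0) {r : ℝ} (hr : 0 < r) :
    0 < Zd a b c r := by
  set s := Real.sinh r with hsdef
  set u := Real.cosh r with hudef
  have hs : 0 < s := Real.sinh_pos_iff.2 hr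
  have hu0 : 0 < u := Real.cosh_pos r
  have hu1 : 1 < u := Real.one_lt_cosh.2 hr.ne'
  have hs2 : s ^ 2 = u ^ 2 - 1 := by
    have := Real.cosh_sq r
    rw [← hsdef, ← hudef] at this
    linarith
  have hlo : 3 * s ≤ r * (2 + u) := lo_bound hr.le
  have hhi : r * (1 + 2 * u) ≤ s * (2 + u) := hi_bound hr.le
  have h2u : (0:ℝ) < 2 + u := by linarith
  have h12u : (0:ℝ) < 1 + 2 * u := by linarith
  have hsne : s ≠ 0 := hs.ne'
  have hune : u ≠ 0 := hu0.ne'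
  -- explicit forms
  have eL : Lf a b r = (a * u ^ 2 - b * s ^ 2) / (s ^ 2 * u ^ 2) := by
    rw [Lf, ← hsdef, ← hudef]; field_simp
  have eL1 : L1f a b r = 2 * (b * s ^ 4 - a * u ^ 4) / (s ^ 3 * u ^ 3) := by
    rw [L1f, ← hsdef, ← hudef]
  have eL2 : L2f a b r = (-2 * a * (s ^ 2 - 3 * u ^ 2) * u ^ 4 +
      2 * b * (u ^ 2 - 3 * s ^ 2) * s ^ 4) / (s ^ 4 * u ^ 4) := by
    rw [L2f, ← hsdef, ← hudef]
  have eH : Hf a b r = (a * u ^ 2 + b * s ^ 2) / (s * u) := by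
    rw [Hf, ← hsdef, ← hudef]
  have eHd : Hdf a b r = -((a * u ^ 2 - b * s ^ 2) / (s ^ 2 * u ^ 2)) := by
    rw [Hdf, ← hsdef, ← hudef]
    have h1 : u ^ 2 - s ^ 2 = 1 := by linarith
    rw [h1]
    ring
  rw [Zd, eL, eL1, eL2, eH, eHd]
  -- main positivity facts
  have hP1 : 0 < a * u ^ 2 - b * s ^ 2 := by nlinarith
  have hP2 : 0 < a * u ^ 4 - b * s ^ 4 := by
    have hs4 : s ^ 4 = (u ^ 2 - 1) ^ 2 := by rw [← hs2]; ring
    have hu2 : 1 ≤ u ^ 2 := by nlinarith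
    have hu4 : 1 ≤ u ^ 4 := by nlinarith
    nlinarith [hs4, hu4]
  -- concave quadratic part
  have hDD : (a * u ^ 2 - b * s ^ 2) / (s ^ 2 * u ^ 2) *
      (2 * (b * s ^ 4 - a * u ^ 4) / (s ^ 3 * u ^ 3)) ≤ 0 := by
    apply mul_nonpos_of_nonneg_of_nonpos
    · positivity
    · apply div_nonpos_of_nonpos_of_nonneg
      · linarith
      · positivity
  have hr1 : 3 * s / (2 + u) ≤ r := (div_le_iff₀ h2u).2 (by linarith)
  have hr2 : r ≤ s * (2 + u) / (1 + 2 * u) := (le_div_iff₀ h12u).2 hhi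
  have h12 : 3 * s / (2 + u) < s * (2 + u) / (1 + 2 * u) := by
    rw [div_lt_div_iff₀ h2u h12u]
    nlinarith [pow_pos (by linarith : (0:ℝ) < u - 1) 2]
  have hGlo : 0 < (3 * (2 * (b * s ^ 4 - a * u ^ 4) / (s ^ 3 * u ^ 3)) +
      (a * u ^ 2 + b * s ^ 2) / (s * u) * ((a * u ^ 2 - b * s ^ 2) / (s ^ 2 * u ^ 2))) +
      ((-2 * a * (s ^ 2 - 3 * u ^ 2) * u ^ 4 + 2 * b * (u ^ 2 - 3 * s ^ 2) * s ^ 4) /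
        (s ^ 4 * u ^ 4) + ((a * u ^ 2 - b * s ^ 2) / (s ^ 2 * u ^ 2)) ^ 2) * (3 * s / (2 + u)) +
      ((a * u ^ 2 - b * s ^ 2) / (s ^ 2 * u ^ 2) *
        (2 * (b * s ^ 4 - a * u ^ 4) / (s ^ 3 * u ^ 3))) * (3 * s / (2 + u)) ^ 2 := by
    have hP := plo_pos a b u s hb ha hu1 hs2
    have e : (3 * (2 * (b * s ^ 4 - a * u ^ 4) / (s ^ 3 * u ^ 3)) +
        (a * u ^ 2 + b * s ^ 2) / (s * u) * ((a * u ^ 2 - b * s ^ 2) / (s ^ 2 * u ^ 2))) +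
        ((-2 * a * (s ^ 2 - 3 * u ^ 2) * u ^ 4 + 2 * b * (u ^ 2 - 3 * s ^ 2) * s ^ 4) /
          (s ^ 4 * u ^ 4) + ((a * u ^ 2 - b * s ^ 2) / (s ^ 2 * u ^ 2)) ^ 2) * (3 * s / (2 + u)) +
        ((a * u ^ 2 - b * s ^ 2) / (s ^ 2 * u ^ 2) *
          (2 * (b * s ^ 4 - a * u ^ 4) / (s ^ 3 * u ^ 3))) * (3 * s / (2 + u)) ^ 2 =
        (6 * (b * s ^ 4 - a * u ^ 4) * u ^ 2 * (2 + u) ^ 2 +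
      3 * u * (2 + u) * (-2 * a * (s ^ 2 - 3 * u ^ 2) * u ^ 4 + 2 * b * (u ^ 2 - 3 * s ^ 2) * s ^ 4) +
      (a ^ 2 * u ^ 4 - b ^ 2 * s ^ 4) * u ^ 2 * (2 + u) ^ 2 +
      3 * u * (2 + u) * (a * u ^ 2 - b * s ^ 2) ^ 2 +
      18 * (a * u ^ 2 - b * s ^ 2) * (b * s ^ 4 - a * u ^ 4)) / (s ^ 3 * u ^ 5 * (2 + u) ^ 2) := by
      field_simp
      ring
    rw [e]
    exact div_pos hP (by positivity)
  have hGhi : 0 < (3 * (2 * (b * s ^ 4 - a * u ^ 4) / (s ^ 3 * u ^ 3)) +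
      (a * u ^ 2 + b * s ^ 2) / (s * u) * ((a * u ^ 2 - b * s ^ 2) / (s ^ 2 * u ^ 2))) +
      ((-2 * a * (s ^ 2 - 3 * u ^ 2) * u ^ 4 + 2 * b * (u ^ 2 - 3 * s ^ 2) * s ^ 4) /
        (s ^ 4 * u ^ 4) + ((a * u ^ 2 - b * s ^ 2) / (s ^ 2 * u ^ 2)) ^ 2) *
        (s * (2 + u) / (1 + 2 * u)) +
      ((a * u ^ 2 - b * s ^ 2) / (s ^ 2 * u ^ 2) *
        (2 * (b * s ^ 4 - a * u ^ 4) / (s ^ 3 * u ^ 3))) * (s * (2 + u) / (1 + 2 * u)) ^ 2 := by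
    have hP := phi_pos a b u s hb ha hu1 hs2
    have e : (3 * (2 * (b * s ^ 4 - a * u ^ 4) / (s ^ 3 * u ^ 3)) +
        (a * u ^ 2 + b * s ^ 2) / (s * u) * ((a * u ^ 2 - b * s ^ 2) / (s ^ 2 * u ^ 2))) +
        ((-2 * a * (s ^ 2 - 3 * u ^ 2) * u ^ 4 + 2 * b * (u ^ 2 - 3 * s ^ 2) * s ^ 4) /
          (s ^ 4 * u ^ 4) + ((a * u ^ 2 - b * s ^ 2) / (s ^ 2 * u ^ 2)) ^ 2) *
          (s * (2 + u) / (1 + 2 * u)) +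
        ((a * u ^ 2 - b * s ^ 2) / (s ^ 2 * u ^ 2) *
          (2 * (b * s ^ 4 - a * u ^ 4) / (s ^ 3 * u ^ 3))) * (s * (2 + u) / (1 + 2 * u)) ^ 2 =
        (6 * (b * s ^ 4 - a * u ^ 4) * u ^ 2 * (1 + 2 * u) ^ 2 +
      u * (2 + u) * (1 + 2 * u) * (-2 * a * (s ^ 2 - 3 * u ^ 2) * u ^ 4 + 2 * b * (u ^ 2 - 3 * s ^ 2) * s ^ 4) +
      (a ^ 2 * u ^ 4 - b ^ 2 * s ^ 4) * u ^ 2 * (1 + 2 * u) ^ 2 +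
      u * (2 + u) * (1 + 2 * u) * (a * u ^ 2 - b * s ^ 2) ^ 2 +
      2 * (2 + u) ^ 2 * (a * u ^ 2 - b * s ^ 2) * (b * s ^ 4 - a * u ^ 4)) / (s ^ 3 * u ^ 5 * (1 + 2 * u) ^ 2) := by
      field_simp
      ring
    rw [e]
    exact div_pos hP (by positivity)
  have hquad := quad_lower hDD hr1 hr2 h12 hGlo hGhi
  -- the c-dependent part
  have hK : 2 * (b * s ^ 4 - a * u ^ 4) / (s ^ 3 * u ^ 3) * r +
      2 * ((a * u ^ 2 - b * s ^ 2) / (s ^ 2 * u ^ 2)) ≤ 0 := by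
    have base : (2 + u) * ((a * u ^ 2 - b * s ^ 2) * u) ≤ 3 * (a * u ^ 4 - b * s ^ 4) := by
      have id1 : 3 * (a * u ^ 4 - b * s ^ 4) - (2 + u) * ((a * u ^ 2 - b * s ^ 2) * u) =
          (u - 1) * (2 * (a - b) * u ^ 3 + 5 * b * u + 3 * b) := by
        linear_combination (-3 * b * (s ^ 2 + u ^ 2 - 1) + (2 + u) * u * b) * hs2
      have hub : (0:ℝ) ≤ 2 * (a - b) * u ^ 3 + 5 * b * u + 3 * b := by
        have h1 : (0:ℝ) ≤ (a - b) * u ^ 3 :=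
          mul_nonneg (by linarith) (pow_pos hu0 3).le
        have h2 : (0:ℝ) < b * u := mul_pos (by linarith) hu0
        linarith
      nlinarith [mul_nonneg (by linarith : (0:ℝ) ≤ u - 1) hub]
    have hnum : (a * u ^ 2 - b * s ^ 2) * s * u ≤ (a * u ^ 4 - b * s ^ 4) * r := by
      have c1 : 3 * s * (a * u ^ 4 - b * s ^ 4) ≤ r * (2 + u) * (a * u ^ 4 - b * s ^ 4) := by
        have := mul_le_mul_of_nonneg_right hlo hP2.le
        linarith [this]
      have c2 : (2 + u) * ((a * u ^ 2 - b * s ^ 2) * u) * s ≤ 3 * (a * u ^ 4 - b * s ^ 4) * s :=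
        mul_le_mul_of_nonneg_right base hs.le
      have := mul_pos h2u hP2
      nlinarith [c1, c2]
    have e2 : 2 * (b * s ^ 4 - a * u ^ 4) / (s ^ 3 * u ^ 3) * r +
        2 * ((a * u ^ 2 - b * s ^ 2) / (s ^ 2 * u ^ 2)) =
        2 * ((a * u ^ 2 - b * s ^ 2) * s * u - (a * u ^ 4 - b * s ^ 4) * r) / (s ^ 3 * u ^ 3) := by
      field_simp
      ring
    rw [e2]
    apply div_nonpos_of_nonpos_of_nonneg
    · linarith
    · positivity
  have hcr : 0 ≤ c * (r * (2 * (b * s ^ 4 - a * u ^ 4) / (s ^ 3 * u ^ 3) * r +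
      2 * ((a * u ^ 2 - b * s ^ 2) / (s ^ 2 * u ^ 2)))) :=
    by
      have h' := mul_nonneg (neg_nonneg.2 hc.le)
        (neg_nonneg.2 (mul_nonpos_of_nonneg_of_nonpos hr.le hK))
      rwa [neg_mul_neg] at h'
  have hc2 : 0 < c ^ 2 * r :=
    mul_pos (by nlinarith [mul_pos_of_neg_of_neg hc hc]) hr
  nlinarith [hquad, hcr, hc2]

/-! ### Transfer to `Zfun` -/

lemma Zfun_eq (k n : ℕ) (lam1 lam2 : ℝ) {r : ℝ} (hr : 0 < r) :
    Zfun k n lam1 lam2 r 1 = Z1 ((k : ℝ) * n - 1) ((k : ℝ) - 1) (lam1 - lam2) lam1 r := by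
  have hs : Real.sinh r ≠ 0 := (Real.sinh_pos_iff.2 hr).ne'
  have hc : Real.cosh r ≠ 0 := (Real.cosh_pos r).ne'
  have hLfun : Lfun k n = Lf ((k : ℝ) * n - 1) ((k : ℝ) - 1) := by
    funext x; rw [Lfun, Lf]
  have hderiv : deriv (Lfun k n) r = L1f ((k : ℝ) * n - 1) ((k : ℝ) - 1) r := by
    rw [hLfun]
    exact (hasDerivAt_Lf _ _ hs).deriv
  have hHfun : Hfun k n r = Hf ((k : ℝ) * n - 1) ((k : ℝ) - 1) r := by
    rw [Hfun, Hf, Real.tanh_eq_sinh_div_cosh]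
    field_simp
  rw [Zfun, Sfun, hderiv, hHfun, hLfun, Z1]
  have hrne : r ≠ 0 := hr.ne'
  field_simp
  ring

/-- The function r ↦ Z(r,1) is strictly increasing on (0,∞). -/
theorem stmt_11
    (k n : ℕ) (hk : k = 2 ∨ k = 4 ∨ k = 8) (hn : 2 ≤ n) (hk8 : k = 8 → n = 2)
    (lam1 lam2 : ℝ) (hlam : lam1 < lam2) :
    StrictMonoOn (fun r => Zfun k n lam1 lam2 r 1) (Set.Ioi (0 : ℝ)) := by
  set a : ℝ := (k : ℝ) * n - 1 with hadef
  set b : ℝ := (k : ℝ) - 1 with hbdef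
  have hk2 : (2:ℝ) ≤ (k:ℝ) := by
    rcases hk with rfl|rfl|rfl <;> norm_num
  have hn2 : (2:ℝ) ≤ (n:ℝ) := by exact_mod_cast hn
  have hb : 1 ≤ b := by rw [hbdef]; linarith
  have ha : 2 * b + 1 ≤ a := by
    rw [hadef, hbdef]
    nlinarith
  have hc : lam1 - lam2 < 0 := by linarith
  have hmono : StrictMonoOn (Z1 a b (lam1 - lam2) lam1) (Set.Ioi (0:ℝ)) := by
    apply strictMonoOn_of_deriv_pos (convex_Ioi 0)
    · intro x hx
      have hs : Real.sinh x ≠ 0 := (Real.sinh_pos_iff.2 hx).ne'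
      exact (hasDerivAt_Z1 a b (lam1 - lam2) lam1 hs).continuousAt.continuousWithinAt
    · intro x hx
      rw [interior_Ioi] at hx
      have hs : Real.sinh x ≠ 0 := (Real.sinh_pos_iff.2 hx).ne'
      rw [(hasDerivAt_Z1 a b (lam1 - lam2) lam1 hs).deriv]
      exact Zd_pos a b (lam1 - lam2) hb ha hc hx
  intro x hx y hy hxy
  have ex := Zfun_eq k n lam1 lam2 hx
  have ey := Zfun_eq k n lam1 lam2 hy
  simp only [Set.mem_Ioi] at hx hy
  simpa [ex, ey] using hmono (Set.mem_Ioi.2 hx) (Set.mem_Ioi.2 hy) hxy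
end
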